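/- arXiv:2503.18493 — 2 statements merged into one kernel-verified Lean document; each statement's English description precedes it below -/
import Mathlib

section
/- For all integers m ≥ 0, n ≥ 0 and for each w ∈ {3, 5, 7}, the generalized overcubic partition function satisfies a̅_{8m+3}(8n + w) ≡ 0 (mod 16). -/
/-- The infinite product `(q^h; q^h)_∞ = ∏_{k ≥ 0} (1 - q^{h(k+1)})` as a formal power
series over `R`.  Since the factor `1 - q^{h(k+1)}` only affects coefficients of
degree `≥ k + 1`, the coefficient of `qⁿ` is that of the finite truncated product
over `k < n + 1`. -/
noncomputable def qPochInf (R : Type*) [CommRing R] (h : ℕ) : PowerSeries R :=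
  PowerSeries.mk fun n =>
    PowerSeries.coeff (R := R) n
      (∏ k ∈ Finset.range (n + 1), (1 - PowerSeries.X ^ (h * (k + 1))))

/-- `abar` is the generalized overcubic partition family: for every `c ≥ 1`,
`∑_{n≥0} a̅_c(n) qⁿ = f₄^(c-1) / (f₁² f₂^(2c-3))`, stated multiplied out (both sides
multiplied by `f₁² f₂^(2c-3) · f₂³ = f₁² f₂^(2c) / f₂³`, i.e. as
`(∑ a̅_c(n) qⁿ) · f₁² · f₂^(2c) = f₄^(c-1) · f₂³`) so as to avoid the negative
exponent `2c - 3 = -1` occurring when `c = 1`; this is equivalent since the `fₕ`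
are units in the ring of formal power series. -/
def IsGenOvercubic (abar : ℕ → ℕ → ℕ) : Prop :=
  ∀ c : ℕ, 1 ≤ c →
    (PowerSeries.mk fun n => (abar c n : ℤ)) * qPochInf ℤ 1 ^ 2 * qPochInf ℤ 2 ^ (2 * c) =
      qPochInf ℤ 4 ^ (c - 1) * qPochInf ℤ 2 ^ 3

namespace OC
open PowerSeries Finset

variable {R : Type*} [CommRing R]

/-- truncated Pochhammer product -/
noncomputable def pp (R : Type*) [CommRing R] (h L : ℕ) : PowerSeries R :=
  ∏ k ∈ Finset.range L, (1 - PowerSeries.X ^ (h * (k + 1)))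

lemma coeff_qPochInf (h n : ℕ) :
    coeff (R := R) n (qPochInf R h) = coeff (R := R) n (pp R h (n + 1)) := by
  simp [qPochInf, pp]

lemma coeff_mul_one_sub_X_pow (A : PowerSeries R) {k m : ℕ} (hm : k < m) :
    coeff (R := R) k (A * (1 - X ^ m)) = coeff (R := R) k A := by
  rw [mul_sub, mul_one, map_sub, coeff_mul_X_pow', if_neg (by omega), sub_zero]

lemma coeff_mul_one_add_X_pow (A : PowerSeries R) {k m : ℕ} (hm : k < m) :
    coeff (R := R) k (A * (1 + X ^ m)) = coeff (R := R) k A := by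
  rw [mul_add, mul_one, map_add, coeff_mul_X_pow', if_neg (by omega), add_zero]

lemma coeff_pp_stable {h : ℕ} (hh : 1 ≤ h) {k L L' : ℕ} (hL : k < L) (hL' : L ≤ L') :
    coeff (R := R) k (pp R h L') = coeff (R := R) k (pp R h L) := by
  induction L', hL' using Nat.le_induction with
  | base => rfl
  | succ L' hLL ih =>
      rw [pp, Finset.prod_range_succ, ← pp, coeff_mul_one_sub_X_pow, ih]
      calc k < L := hL
        _ ≤ L' + 1 := by omega
        _ ≤ h * (L' + 1) := Nat.le_mul_of_pos_left _ hh

lemma coeff_qPochInf_pp {h : ℕ} (hh : 1 ≤ h) {k L : ℕ} (hk : k < L) :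
    coeff (R := R) k (qPochInf R h) = coeff (R := R) k (pp R h L) := by
  rw [coeff_qPochInf, ← coeff_pp_stable hh (Nat.lt_succ_self k) (by omega : k + 1 ≤ max (k+1) L),
    coeff_pp_stable hh hk (by omega : L ≤ max (k+1) L)]

/-- coefficient agreement up to `N` -/
def CEq (N : ℕ) (A B : PowerSeries R) : Prop := ∀ k ≤ N, coeff (R := R) k A = coeff (R := R) k B

lemma CEq.refl {N : ℕ} (A : PowerSeries R) : CEq N A A := fun _ _ => rfl

lemma CEq.mul {N : ℕ} {A A' B B' : PowerSeries R} (hA : CEq N A A') (hB : CEq N B B') :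
    CEq N (A * B) (A' * B') := by
  intro k hk
  rw [coeff_mul, coeff_mul]
  refine Finset.sum_congr rfl fun p hp => ?_
  rw [Finset.HasAntidiagonal.mem_antidiagonal] at hp
  rw [hA p.1 (by omega), hB p.2 (by omega)]

lemma CEq.pow {N : ℕ} {A A' : PowerSeries R} (hA : CEq N A A') (j : ℕ) :
    CEq N (A ^ j) (A' ^ j) := by
  induction j with
  | zero => simpa using CEq.refl 1
  | succ j ih => rw [pow_succ, pow_succ]; exact ih.mul hA

lemma ceq_qPochInf {h : ℕ} (hh : 1 ≤ h) {N L : ℕ} (hL : N < L) :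
    CEq N (qPochInf R h) (pp R h L) := fun k hk => coeff_qPochInf_pp hh (by omega)


noncomputable def oddp (R : Type*) [CommRing R] (L : ℕ) : PowerSeries R :=
  ∏ k ∈ Finset.range L, (1 - PowerSeries.X ^ (2 * k + 1))

noncomputable def Hfin (R : Type*) [CommRing R] (L : ℕ) : PowerSeries R :=
  ∏ k ∈ Finset.range L, (1 + PowerSeries.X ^ (2 * k + 1))

noncomputable def m42 (R : Type*) [CommRing R] (L : ℕ) : PowerSeries R :=
  ∏ k ∈ Finset.range L, (1 - PowerSeries.X ^ (4 * k + 2))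

lemma split1 (L : ℕ) : pp R 1 (2 * L) = pp R 2 L * oddp R L := by
  induction L with
  | zero => simp [pp, oddp]
  | succ L ih =>
      have h2 : 2 * (L + 1) = (2 * L + 1) + 1 := by ring
      rw [pp, h2, Finset.prod_range_succ, Finset.prod_range_succ, ← pp, ih,
        ]
      simp only [pp, oddp, Finset.prod_range_succ]
      have e1 : 1 * (2 * L + 1) = 2 * L + 1 := by ring
      have e2 : 1 * (2 * L + 1 + 1) = 2 * (L + 1) := by ring
      rw [e1, e2]; ring

lemma split2 (L : ℕ) : pp R 2 (2 * L) = pp R 4 L * m42 R L := by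
  induction L with
  | zero => simp [pp, m42]
  | succ L ih =>
      have h2 : 2 * (L + 1) = (2 * L + 1) + 1 := by ring
      rw [pp, h2, Finset.prod_range_succ, Finset.prod_range_succ, ← pp, ih,
        ]
      simp only [pp, m42, Finset.prod_range_succ]
      have e1 : 2 * (2 * L + 1) = 4 * L + 2 := by ring
      have e2 : 2 * (2 * L + 1 + 1) = 4 * (L + 1) := by ring
      rw [e1, e2]; ring

lemma split3 (L : ℕ) : Hfin R L * oddp R L = m42 R L := by
  rw [Hfin, oddp, m42, ← Finset.prod_mul_distrib]
  refine Finset.prod_congr rfl fun k _ => ?_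
  have : (4 * k + 2) = (2 * k + 1) + (2 * k + 1) := by ring
  rw [this, pow_add]
  ring


/-- Gaussian binomial `[n choose k]` in base `q = X^2`. -/
noncomputable def gb : ℕ → ℕ → PowerSeries ℤ
  | 0, 0 => 1
  | 0, _ + 1 => 0
  | _ + 1, 0 => 1
  | n + 1, k + 1 => gb n (k + 1) + X ^ (2 * (n - k)) * gb n k

lemma gb_zero : ∀ {n k : ℕ}, n < k → gb n k = 0
  | 0, 0, h => absurd h (by omega)
  | 0, k + 1, _ => rfl
  | n + 1, k + 1, h => by
      rw [gb, gb_zero (show n < k + 1 by omega), gb_zero (show n < k by omega)]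
      ring

lemma gb_nought : ∀ n, gb n 0 = 1
  | 0 => rfl
  | _ + 1 => rfl

lemma gb_self : ∀ n, gb n n = 1
  | 0 => rfl
  | n + 1 => by
      rw [gb, gb_zero (Nat.lt_succ_self n), gb_self n]
      simp

lemma gb_one (n : ℕ) : gb n 1 = ∑ i ∈ Finset.range n, X ^ (2 * i) := by
  induction n with
  | zero => simp [gb]
  | succ n ih => rw [gb, ih, gb_nought, Finset.sum_range_succ]; simp [mul_comm, add_comm]

/-- second Pascal rule -/
lemma gb_B : ∀ n k : ℕ, gb (n + 1) (k + 1) = X ^ (2 * (k + 1)) * gb n (k + 1) + gb n k := by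
  intro n
  induction n with
  | zero =>
      intro k
      match k with
      | 0 => simp [gb]
      | k + 1 => simp [gb, gb_zero (show 0 < k + 1 by omega), gb_zero (show 0 < k + 2 by omega),
          gb_zero (show 1 < k + 2 by omega)]
  | succ n ih =>
      intro k
      match k with
      | 0 =>
          have A0 : gb (n + 1 + 1) 1 = gb (n + 1) 1 + X ^ (2 * (n + 1 - 0)) * gb (n + 1) 0 := by
            conv_lhs => rw [gb]
          rw [A0, gb_nought, gb_one, mul_one]
          have key : (X : PowerSeries ℤ) ^ (2 * (0 + 1)) * ∑ i ∈ Finset.range (n + 1), X ^ (2 * i)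
              = ∑ i ∈ Finset.range (n + 1), X ^ (2 * (i + 1)) := by
            rw [Finset.mul_sum]
            refine Finset.sum_congr rfl fun i _ => ?_
            rw [← pow_add]; congr 1; ring
          rw [key, show (2 * (n + 1 - 0)) = 2 * (n + 1) by omega]
          have h2 := Finset.sum_range_succ' (fun i => (X : PowerSeries ℤ) ^ (2 * i)) (n + 1)
          rw [Finset.sum_range_succ (fun i => (X : PowerSeries ℤ) ^ (2 * i)) (n + 1)] at h2
          simp only [mul_zero, pow_zero] at h2
          linear_combination h2
      | k + 1 =>
          have A0 : gb (n + 1 + 1) (k + 1 + 1)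
              = gb (n + 1) (k + 1 + 1) + X ^ (2 * (n + 1 - (k + 1))) * gb (n + 1) (k + 1) := by
            conv_lhs => rw [gb]
          have A1 : gb (n + 1) (k + 1 + 1)
              = gb n (k + 1 + 1) + X ^ (2 * (n - (k + 1))) * gb n (k + 1) := by
            conv_lhs => rw [gb]
          have A2 : gb (n + 1) (k + 1) = gb n (k + 1) + X ^ (2 * (n - k)) * gb n k := by
            conv_lhs => rw [gb]
          have B1 := ih (k + 1)
          have B2 := ih k
          rcases Nat.lt_or_ge k n with hk | hk
          · have Eh : (X : PowerSeries ℤ) ^ (2 * (n + 1 - (k + 1))) * X ^ (2 * (k + 1))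
                = X ^ (2 * (k + 1 + 1)) * X ^ (2 * (n - (k + 1))) := by
              rw [← pow_add, ← pow_add]; congr 1; omega
            calc gb (n + 1 + 1) (k + 1 + 1)
                = gb (n + 1) (k + 1 + 1) + X ^ (2 * (n + 1 - (k + 1))) * gb (n + 1) (k + 1) := A0
              _ = (X ^ (2 * (k + 1 + 1)) * gb n (k + 1 + 1) + gb n (k + 1))
                  + X ^ (2 * (n + 1 - (k + 1))) * (X ^ (2 * (k + 1)) * gb n (k + 1) + gb n k) := by
                  rw [B1, B2]
              _ = X ^ (2 * (k + 1 + 1)) * (gb n (k + 1 + 1) + X ^ (2 * (n - (k + 1))) * gb n (k + 1))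
                  + (gb n (k + 1) + X ^ (2 * (n + 1 - (k + 1))) * gb n k) := by
                  linear_combination gb n (k + 1) * Eh
              _ = X ^ (2 * (k + 1 + 1)) * gb (n + 1) (k + 1 + 1) + gb (n + 1) (k + 1) := by
                  rw [← A1, show 2 * (n + 1 - (k + 1)) = 2 * (n - k) by omega, ← A2]
          · have hz : gb n (k + 1) = 0 := gb_zero (by omega)
            have hz2 : gb n (k + 1 + 1) = 0 := gb_zero (by omega)
            rw [A0, A1, A2, hz, hz2]
            simp only [show 2 * (n + 1 - (k + 1)) = 0 by omega, show 2 * (n - k) = 0 by omega,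
              show 2 * (n - (k + 1)) = 0 by omega, pow_zero]
            ring

lemma gbMIX1 (n : ℕ) : gb (2 * n + 2) 1
    = X ^ 2 * gb (2 * n) 1 + (1 + X ^ (2 * (2 * n + 1))) * gb (2 * n) 0 := by
  have B0 := gb_B (2 * n + 1) 0
  have A1 : gb (2 * n + 1) (0 + 1) = gb (2 * n) (0 + 1) + X ^ (2 * (2 * n - 0)) * gb (2 * n) 0 := by
    conv_lhs => rw [gb]
  rw [A1] at B0
  rw [show 2 * n + 1 + 1 = 2 * n + 2 by omega] at B0
  norm_num [gb_nought] at B0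
  rw [B0, gb_nought]
  have E : (X : PowerSeries ℤ) ^ 2 * X ^ (2 * (2 * n)) = X ^ (2 * (2 * n + 1)) := by
    rw [← pow_add]; congr 1; ring
  linear_combination E

lemma gbMIX (n k : ℕ) : gb (2 * n + 2) (k + 2)
    = X ^ (2 * (k + 2)) * gb (2 * n) (k + 2) + (1 + X ^ (2 * (2 * n + 1))) * gb (2 * n) (k + 1)
      + X ^ (2 * (2 * n - k)) * gb (2 * n) k := by
  have B0 := gb_B (2 * n + 1) (k + 1)
  have A1 : gb (2 * n + 1) (k + 1 + 1)
      = gb (2 * n) (k + 1 + 1) + X ^ (2 * (2 * n - (k + 1))) * gb (2 * n) (k + 1) := by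
    conv_lhs => rw [gb]
  have A2 : gb (2 * n + 1) (k + 1) = gb (2 * n) (k + 1) + X ^ (2 * (2 * n - k)) * gb (2 * n) k := by
    conv_lhs => rw [gb]
  rw [A1, A2] at B0
  rw [show 2 * n + 1 + 1 = 2 * n + 2 by omega, show k + 1 + 1 = k + 2 by omega] at B0
  rw [B0]
  rcases Nat.lt_or_ge k (2 * n) with hk | hk
  · have E : (X : PowerSeries ℤ) ^ (2 * (k + 2)) * X ^ (2 * (2 * n - (k + 1)))
        = X ^ (2 * (2 * n + 1)) := by
      rw [← pow_add]; congr 1; omega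
    linear_combination gb (2 * n) (k + 1) * E
  · rw [gb_zero (show 2 * n < k + 1 by omega)]
    ring

/-- squared distance `(n - m)²` -/
def dd (n m : ℕ) : ℕ := ((n - m) + (m - n)) ^ 2

lemma dd_cast (a b : ℕ) : (dd a b : ℤ) = ((a : ℤ) - b) ^ 2 := by
  unfold dd
  rcases Nat.le_total a b with h | h
  · rw [Nat.sub_eq_zero_of_le h]
    push_cast [h]
    ring
  · rw [Nat.sub_eq_zero_of_le h]
    push_cast [h]
    ring

/-- coefficients of `∏_{j<n} (1 + x q^{2j+1})(x + q^{2j+1})`, defined by the recurrence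
that product satisfies. -/
noncomputable def cc : ℕ → ℕ → PowerSeries ℤ
  | 0, 0 => 1
  | 0, _ + 1 => 0
  | n + 1, 0 => X ^ (2 * n + 1) * cc n 0
  | n + 1, 1 => X ^ (2 * n + 1) * cc n 1 + (1 + X ^ (4 * n + 2)) * cc n 0
  | n + 1, m + 2 => X ^ (2 * n + 1) * (cc n (m + 2) + cc n m) + (1 + X ^ (4 * n + 2)) * cc n (m + 1)

lemma cc_zero : ∀ {n m : ℕ}, 2 * n < m → cc n m = 0
  | 0, m + 1, _ => rfl
  | n + 1, 1, h => absurd h (by omega)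
  | n + 1, m + 2, h => by
      rw [cc, cc_zero (show 2 * n < m + 2 by omega), cc_zero (show 2 * n < m + 1 by omega),
        cc_zero (show 2 * n < m by omega)]
      ring

lemma cc_closed : ∀ n m : ℕ, cc n m = gb (2 * n) m * X ^ (dd n m) := by
  intro n
  induction n with
  | zero =>
      intro m
      match m with
      | 0 => simp [cc, gb, dd]
      | m + 1 => simp [cc, gb, dd]
  | succ n ih =>
      intro m
      have h2n : 2 * (n + 1) = 2 * n + 2 := by ring
      match m with
      | 0 =>
          rw [show cc (n + 1) 0 = X ^ (2 * n + 1) * cc n 0 from rfl, ih 0, h2n, gb_nought,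
            gb_nought]
          have E : (X : PowerSeries ℤ) ^ (2 * n + 1) * X ^ (dd n 0) = X ^ (dd (n + 1) 0) := by
            rw [← pow_add]; congr 1
            have : ((2 * n + 1 + dd n 0 : ℕ) : ℤ) = ((dd (n + 1) 0 : ℕ) : ℤ) := by
              push_cast [dd_cast]; ring
            exact_mod_cast this
          linear_combination E
      | 1 =>
          rw [show cc (n + 1) 1 = X ^ (2 * n + 1) * cc n 1 + (1 + X ^ (4 * n + 2)) * cc n 0
            from rfl, ih 0, ih 1, h2n, gbMIX1, gb_nought]
          have E1 : (X : PowerSeries ℤ) ^ 2 * X ^ (dd (n + 1) 1)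
              = X ^ (2 * n + 1) * X ^ (dd n 1) := by
            rw [← pow_add, ← pow_add]; congr 1
            have : ((2 + dd (n + 1) 1 : ℕ) : ℤ) = ((2 * n + 1 + dd n 1 : ℕ) : ℤ) := by
              push_cast [dd_cast]; ring
            exact_mod_cast this
          have E3 : (1 + (X : PowerSeries ℤ) ^ (2 * (2 * n + 1))) * X ^ (dd (n + 1) 1)
              = (1 + X ^ (4 * n + 2)) * X ^ (dd n 0) := by
            rw [show 2 * (2 * n + 1) = 4 * n + 2 by ring]
            congr 1
            congr 1
            have : ((dd (n + 1) 1 : ℕ) : ℤ) = ((dd n 0 : ℕ) : ℤ) := by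
              push_cast [dd_cast]; ring
            exact_mod_cast this
          linear_combination (-(gb (2 * n) 1) * E1) - E3
      | m + 2 =>
          rw [show cc (n + 1) (m + 2) = X ^ (2 * n + 1) * (cc n (m + 2) + cc n m)
              + (1 + X ^ (4 * n + 2)) * cc n (m + 1) from rfl,
            ih m, ih (m + 1), ih (m + 2), h2n, gbMIX]
          rcases Nat.lt_or_ge m (2 * n + 1) with hm | hm
          · have E1 : (X : PowerSeries ℤ) ^ (2 * (m + 2)) * X ^ (dd (n + 1) (m + 2))
                = X ^ (2 * n + 1) * X ^ (dd n (m + 2)) := by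
              rw [← pow_add, ← pow_add]; congr 1
              have : ((2 * (m + 2) + dd (n + 1) (m + 2) : ℕ) : ℤ)
                  = ((2 * n + 1 + dd n (m + 2) : ℕ) : ℤ) := by
                push_cast [dd_cast]; ring
              exact_mod_cast this
            have E3 : (1 + (X : PowerSeries ℤ) ^ (2 * (2 * n + 1))) * X ^ (dd (n + 1) (m + 2))
                = (1 + X ^ (4 * n + 2)) * X ^ (dd n (m + 1)) := by
              rw [show 2 * (2 * n + 1) = 4 * n + 2 by ring]
              congr 1
              congr 1
              have : ((dd (n + 1) (m + 2) : ℕ) : ℤ) = ((dd n (m + 1) : ℕ) : ℤ) := by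
                push_cast [dd_cast]; ring
              exact_mod_cast this
            have E4 : (X : PowerSeries ℤ) ^ (2 * (2 * n - m)) * X ^ (dd (n + 1) (m + 2))
                = X ^ (2 * n + 1) * X ^ (dd n m) := by
              rw [← pow_add, ← pow_add]; congr 1
              have : ((2 * (2 * n - m) + dd (n + 1) (m + 2) : ℕ) : ℤ)
                  = ((2 * n + 1 + dd n m : ℕ) : ℤ) := by
                have hm' : m ≤ 2 * n := by omega
                push_cast [dd_cast, Nat.cast_sub hm']; ring
              exact_mod_cast this
            linear_combination (-(gb (2 * n) (m + 2)) * E1) - gb (2 * n) (m + 1) * E3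
              - gb (2 * n) m * E4
          · rw [gb_zero (show 2 * n < m + 1 by omega), gb_zero (show 2 * n < m + 2 by omega),
              gb_zero (show 2 * n < m from hm)]
            ring


noncomputable def SS (n : ℕ) : PowerSeries ℤ := ∑ m ∈ Finset.range (2 * n + 1), cc n m

lemma SS_rec (n : ℕ) : SS (n + 1) = (1 + 2 * X ^ (2 * n + 1) + X ^ (4 * n + 2)) * SS n := by
  have h3 : ∑ m ∈ Finset.range (2 * n + 3), cc n m = SS n := by
    rw [show 2 * n + 3 = (2 * n + 1) + 1 + 1 by ring, Finset.sum_range_succ,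
      Finset.sum_range_succ, cc_zero (show 2 * n < 2 * n + 1 + 1 by omega),
      cc_zero (show 2 * n < 2 * n + 1 by omega), SS]
    ring
  have h2 : ∑ m ∈ Finset.range (2 * n + 2), cc n m = SS n := by
    rw [show 2 * n + 2 = (2 * n + 1) + 1 by ring, Finset.sum_range_succ,
      cc_zero (show 2 * n < 2 * n + 1 by omega), SS]
    ring
  have e22 : ∀ i : ℕ, i + 1 + 1 = i + 2 := fun i => rfl
  have q1 := Finset.sum_range_succ' (cc n) (2 * n + 2)
  rw [show 2 * n + 2 + 1 = 2 * n + 3 from rfl, h3] at q1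
  have q2 := Finset.sum_range_succ' (fun i => cc n (i + 1)) (2 * n + 1)
  simp only [e22, show 2 * n + 1 + 1 = 2 * n + 2 from rfl, zero_add] at q2
  have q3 := Finset.sum_range_succ' (cc n) (2 * n + 1)
  rw [show 2 * n + 1 + 1 = 2 * n + 2 from rfl, h2] at q3
  have r1 := Finset.sum_range_succ' (cc (n + 1)) (2 * n + 2)
  rw [show 2 * n + 2 + 1 = 2 * n + 3 from rfl] at r1
  have r2 := Finset.sum_range_succ' (fun i => cc (n + 1) (i + 1)) (2 * n + 1)
  simp only [e22, show 2 * n + 1 + 1 = 2 * n + 2 from rfl, zero_add] at r2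
  have hsplit : ∑ i ∈ Finset.range (2 * n + 1), cc (n + 1) (i + 2)
      = X ^ (2 * n + 1) * ((∑ i ∈ Finset.range (2 * n + 1), cc n (i + 2))
          + SS n)
        + (1 + X ^ (4 * n + 2)) * (∑ i ∈ Finset.range (2 * n + 1), cc n (i + 1)) := by
    have hc : ∀ i ∈ Finset.range (2 * n + 1), cc (n + 1) (i + 2)
        = X ^ (2 * n + 1) * (cc n (i + 2) + cc n i) + (1 + X ^ (4 * n + 2)) * cc n (i + 1) :=
      fun i _ => rfl
    rw [Finset.sum_congr rfl hc, Finset.sum_add_distrib, ← Finset.mul_sum, ← Finset.mul_sum,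
      Finset.sum_add_distrib, mul_add, SS]
    ring
  have hc1 : cc (n + 1) 1 = X ^ (2 * n + 1) * cc n 1 + (1 + X ^ (4 * n + 2)) * cc n 0 := rfl
  have hc0 : cc (n + 1) 0 = X ^ (2 * n + 1) * cc n 0 := rfl
  have hSS1 : SS (n + 1) = ∑ m ∈ Finset.range (2 * n + 3), cc (n + 1) m := by
    rw [SS, show 2 * (n + 1) + 1 = 2 * n + 3 by ring]
  rw [hSS1, r1, r2, hsplit, hc1, hc0]
  linear_combination (-(X ^ (2 * n + 1)) * q1) - (X ^ (2 * n + 1)) * q2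
    - (1 + X ^ (4 * n + 2)) * q3

lemma Hfin_sq (n : ℕ) : Hfin ℤ n ^ 2 = SS n := by
  induction n with
  | zero => simp [Hfin, SS]; rfl
  | succ n ih =>
      rw [Hfin, Finset.prod_range_succ, ← Hfin, mul_pow, ih, SS_rec]
      ring

lemma pp_succ {R : Type*} [CommRing R] (h L : ℕ) :
    pp R h (L + 1) = pp R h L * (1 - X ^ (h * (L + 1))) := Finset.prod_range_succ _ _

lemma constantCoeff_pp {R : Type*} [CommRing R] {h : ℕ} (hh : 1 ≤ h) (L : ℕ) :
    constantCoeff (R := R) (pp R h L) = 1 := by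
  rw [pp, map_prod]
  refine Finset.prod_eq_one fun k _ => ?_
  rw [map_sub, map_one, map_pow, constantCoeff_X, zero_pow (by positivity), sub_zero]

lemma pp_ne_zero {h : ℕ} (hh : 1 ≤ h) (L : ℕ) : pp ℤ h L ≠ 0 := fun hz => by
  have := constantCoeff_pp (R := ℤ) hh L
  rw [hz, map_zero] at this
  exact absurd this (by norm_num)

lemma qfac_mul_gb : ∀ n k : ℕ, k ≤ n → pp ℤ 2 k * pp ℤ 2 (n - k) * gb n k = pp ℤ 2 n := by
  intro n
  induction n with
  | zero => intro k hk; interval_cases k; simp [gb, pp]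
  | succ n ih =>
      intro k hk
      match k with
      | 0 => simp [pp, gb_nought]
      | k + 1 =>
          rcases Nat.eq_or_lt_of_le hk with hk' | hk'
          · have : k = n := by omega
            subst this
            rw [gb_self, Nat.sub_self]
            simp [pp]
          · have hkn : k < n := by omega
            have hA : gb (n + 1) (k + 1) = gb n (k + 1) + X ^ (2 * (n - k)) * gb n k := by
              conv_lhs => rw [gb]
            have e1 : n + 1 - (k + 1) = (n - k - 1) + 1 := by omega
            rw [e1, hA, pp_succ, pp_succ, pp_succ]
            rw [show 2 * ((n - k - 1) + 1) = 2 * (n - k) by omega]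
            have IH1 := ih (k + 1) (by omega)
            rw [show n - (k + 1) = n - k - 1 by omega, pp_succ] at IH1
            have IH2 := ih k (by omega)
            rw [show n - k = (n - k - 1) + 1 by omega, pp_succ,
              show 2 * ((n - k - 1) + 1) = 2 * (n - k) by omega] at IH2
            have E : (X : PowerSeries ℤ) ^ (2 * (n - k)) * X ^ (2 * (k + 1))
                = X ^ (2 * (n + 1)) := by
              rw [← pow_add]; congr 1; omega
            linear_combination (1 - (X : PowerSeries ℤ) ^ (2 * (n - k))) * IH1
              + (X : PowerSeries ℤ) ^ (2 * (n - k)) * ((1 - X ^ (2 * (k + 1))) * IH2)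
              - pp ℤ 2 n * E

lemma gb_symm (n j : ℕ) (hj : j ≤ n) : gb (2 * n) (n - j) = gb (2 * n) (n + j) := by
  have h1 := qfac_mul_gb (2 * n) (n - j) (by omega)
  have h2 := qfac_mul_gb (2 * n) (n + j) (by omega)
  rw [show 2 * n - (n - j) = n + j by omega] at h1
  rw [show 2 * n - (n + j) = n - j by omega] at h2
  have hnz : pp ℤ 2 (n - j) * pp ℤ 2 (n + j) ≠ 0 :=
    mul_ne_zero (pp_ne_zero (by norm_num) _) (pp_ne_zero (by norm_num) _)
  refine mul_left_cancel₀ hnz ?_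
  linear_combination h1 - h2

lemma dvd_prod_one_sub {ι : Type*} (s : Finset ι) (g : ι → PowerSeries ℤ) (dv : PowerSeries ℤ)
    (hg : ∀ i ∈ s, dv ∣ g i) : dv ∣ (∏ i ∈ s, (1 - g i)) - 1 := by
  induction s using Finset.cons_induction with
  | empty => simp
  | cons a s ha ih =>
      rw [Finset.prod_cons]
      have hr : (1 - g a) * ∏ i ∈ s, (1 - g i) - 1
          = ((∏ i ∈ s, (1 - g i)) - 1) - g a * ∏ i ∈ s, (1 - g i) := by ring
      rw [hr]
      exact dvd_sub (ih fun i hi => hg i (by simp [Finset.mem_cons, hi]))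
        (Dvd.dvd.mul_right (hg a (by simp)) _)

lemma gb_congr (n j : ℕ) (hj : j ≤ n) :
    (X : PowerSeries ℤ) ^ (2 * (n - j) + 2) ∣ pp ℤ 2 n * gb (2 * n) (n + j) - 1 := by
  have h2 := qfac_mul_gb (2 * n) (n + j) (by omega)
  rw [show 2 * n - (n + j) = n - j by omega] at h2
  have hs1 : pp ℤ 2 (n + j)
      = pp ℤ 2 n * ∏ i ∈ Finset.range j, (1 - X ^ (2 * (n + i + 1))) := by
    rw [pp, pp, ← Finset.prod_range_add]
  have hs2 : pp ℤ 2 (2 * n)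
      = pp ℤ 2 (n - j) * ∏ i ∈ Finset.range (n + j), (1 - X ^ (2 * ((n - j) + i + 1))) := by
    rw [show 2 * n = (n - j) + (n + j) by omega, pp, pp, ← Finset.prod_range_add]
  rw [hs1, hs2] at h2
  set T2 := ∏ i ∈ Finset.range j, (1 - (X : PowerSeries ℤ) ^ (2 * (n + i + 1))) with hT2def
  set T1 := ∏ i ∈ Finset.range (n + j), (1 - (X : PowerSeries ℤ) ^ (2 * ((n - j) + i + 1)))
    with hT1def
  have key : pp ℤ 2 n * T2 * gb (2 * n) (n + j) = T1 := by
    refine mul_left_cancel₀ (pp_ne_zero (show (1:ℕ) ≤ 2 by norm_num) (n - j)) ?_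
    linear_combination h2
  have hT1 : (X : PowerSeries ℤ) ^ (2 * (n - j) + 2) ∣ T1 - 1 := by
    refine dvd_prod_one_sub _ _ _ fun i _ => pow_dvd_pow X (by omega)
  have hT2 : (X : PowerSeries ℤ) ^ (2 * (n - j) + 2) ∣ T2 - 1 := by
    refine dvd_prod_one_sub _ _ _ fun i _ => pow_dvd_pow X (by omega)
  have hr : pp ℤ 2 n * gb (2 * n) (n + j) - 1
      = (T1 - 1) - (pp ℤ 2 n * gb (2 * n) (n + j)) * (T2 - 1) := by
    linear_combination key
  rw [hr]
  exact dvd_sub hT1 (Dvd.dvd.mul_left hT2 _)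


noncomputable def HinfS (R : Type*) [CommRing R] : PowerSeries R :=
  PowerSeries.mk fun n => PowerSeries.coeff (R := R) n (Hfin R (n + 1))

lemma coeff_Hfin_stable {R : Type*} [CommRing R] {k L L' : ℕ} (hL : k < L) (hL' : L ≤ L') :
    PowerSeries.coeff (R := R) k (Hfin R L') = PowerSeries.coeff (R := R) k (Hfin R L) := by
  induction L', hL' using Nat.le_induction with
  | base => rfl
  | succ L' hLL ih =>
      rw [Hfin, Finset.prod_range_succ, ← Hfin, coeff_mul_one_add_X_pow _ (by omega), ih]

lemma ceq_HinfS {R : Type*} [CommRing R] {N L : ℕ} (hL : N < L) :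
    CEq N (HinfS R) (Hfin R L) := by
  intro k hk
  rw [HinfS, PowerSeries.coeff_mk, ← coeff_Hfin_stable (Nat.lt_succ_self k) (le_refl (k + 1)),
    coeff_Hfin_stable (show k < k + 1 by omega) (le_refl (k + 1)),
    coeff_Hfin_stable (show k < L by omega) (le_refl L)]
  exact (coeff_Hfin_stable (Nat.lt_succ_self k) (by omega : k + 1 ≤ max (k + 1) L)).symm.trans
    (coeff_Hfin_stable (show k < L by omega) (by omega : L ≤ max (k + 1) L))

/-- the theta series `∑_{k ∈ ℤ} q^{k²}` -/
noncomputable def Phi : PowerSeries ℤ :=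
  PowerSeries.mk fun n =>
    if n = 0 then 1 else if Nat.sqrt n * Nat.sqrt n = n then 2 else 0

lemma sum_dd_eval {N n : ℕ} (hn : N < n) :
    ∑ m ∈ Finset.range (2 * n + 1), (PowerSeries.coeff (R := ℤ) N) (X ^ (dd n m))
      = PowerSeries.coeff (R := ℤ) N Phi := by
  simp only [PowerSeries.coeff_X_pow, Phi, PowerSeries.coeff_mk]
  rcases Nat.eq_zero_or_pos N with rfl | hN
  · rw [if_pos rfl]
    rw [Finset.sum_eq_single_of_mem n (by simp; omega)]
    · rw [if_pos (by simp [dd])]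
    · intro b _ hb
      rw [if_neg]
      intro h
      have : ((n - b) + (b - n)) ^ 2 = 0 := h.symm
      have h2 : (n - b) + (b - n) = 0 := by
        simpa [pow_eq_zero_iff] using this
      omega
  · rw [if_neg (by omega)]
    by_cases hs : Nat.sqrt N * Nat.sqrt N = N
    · rw [if_pos hs]
      set s := Nat.sqrt N with hsdef
      have hs1 : 1 ≤ s := by
        rcases Nat.eq_zero_or_pos s with h0 | h1
        · rw [h0] at hs; omega
        · exact h1
      have hsn : s ≤ n := by
        have : s ≤ s * s := Nat.le_mul_of_pos_left s hs1
        omega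
      have hpair : ({n - s, n + s} : Finset ℕ) ⊆ Finset.range (2 * n + 1) := by
        intro x hx
        simp only [Finset.mem_insert, Finset.mem_singleton] at hx
        rcases hx with rfl | rfl <;> (simp only [Finset.mem_range]; omega)
      rw [← Finset.sum_subset hpair]
      · rw [Finset.sum_pair (show n - s ≠ n + s by omega)]
        rw [if_pos (by unfold dd; rw [show n - (n - s) = s by omega,
            show (n - s) - n = 0 by omega, Nat.add_zero, pow_two]; omega),
          if_pos (by unfold dd; rw [show n - (n + s) = 0 by omega,
            show (n + s) - n = s by omega, Nat.zero_add, pow_two]; omega)]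
        norm_num
      · intro x _ hx
        rw [if_neg]
        intro h
        set j := (n - x) + (x - n) with hjdef
        have hjj : j * j = N := by rw [← pow_two]; exact h.symm
        have : Nat.sqrt N = j := by rw [← hjj]; exact Nat.sqrt_eq j
        have hxj : x = n - s ∨ x = n + s := by omega
        simp only [Finset.mem_insert, Finset.mem_singleton] at hx
        tauto
    · rw [if_neg hs]
      refine Finset.sum_eq_zero fun x _ => ?_
      rw [if_neg]
      intro h
      set j := (n - x) + (x - n) with hjdef
      have hjj : j * j = N := by rw [← pow_two]; exact h.symm
      have : Nat.sqrt N = j := by rw [← hjj]; exact Nat.sqrt_eq j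
      rw [this] at hs
      exact hs hjj

lemma Phi_eq : qPochInf ℤ 2 * HinfS ℤ ^ 2 = Phi := by
  ext N
  have hn : N < N + 1 := Nat.lt_succ_self N
  have c1 : CEq N (qPochInf ℤ 2 * HinfS ℤ ^ 2) (pp ℤ 2 (N + 1) * Hfin ℤ (N + 1) ^ 2) :=
    (ceq_qPochInf (by norm_num) hn).mul ((ceq_HinfS hn).pow 2)
  rw [c1 N le_rfl, Hfin_sq, SS, Finset.mul_sum, map_sum]
  have key : ∀ m ∈ Finset.range (2 * (N + 1) + 1),
      PowerSeries.coeff (R := ℤ) N (pp ℤ 2 (N + 1) * cc (N + 1) m)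
        = PowerSeries.coeff (R := ℤ) N (X ^ (dd (N + 1) m)) := by
    intro m hm
    rw [Finset.mem_range] at hm
    set n := N + 1 with hndef
    set j := (n - m) + (m - n) with hjdef
    have hj : j ≤ n := by omega
    have hgb : gb (2 * n) m = gb (2 * n) (n + j) := by
      rcases Nat.le_total m n with h | h
      · rw [show m = n - j by omega]
        exact gb_symm n j hj
      · rw [show m = n + j by omega]
    have hdd : dd n m = j ^ 2 := rfl
    obtain ⟨B, hB⟩ := gb_congr n j hj
    have hexp : pp ℤ 2 n * cc n m
        = X ^ (dd n m) + X ^ (2 * (n - j) + 2) * B * X ^ (j ^ 2) := by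
      rw [cc_closed, hgb, hdd]
      have : pp ℤ 2 n * gb (2 * n) (n + j) = 1 + X ^ (2 * (n - j) + 2) * B := by
        linear_combination hB
      rw [← mul_assoc, this]
      ring
    rw [hexp, map_add, hdd]
    have hdvd : (X : PowerSeries ℤ) ^ (N + 1) ∣ X ^ (2 * (n - j) + 2) * B * X ^ (j ^ 2) := by
      have hle : N + 1 ≤ (2 * (n - j) + 2) + j ^ 2 := by
        have hp : j ^ 2 = j * j := by rw [pow_two]
        have h1 : 2 * j ≤ j * j + 1 := by
          rcases Nat.eq_zero_or_pos j with h0 | h0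
          · omega
          · obtain ⟨i, hi⟩ : ∃ i, j = i + 1 := ⟨j - 1, by omega⟩
            have h2 : (i + 1) * (i + 1) = i * i + 2 * i + 1 := by ring
            have h3 : j * j = (i + 1) * (i + 1) := by rw [hi]
            omega
        omega
      calc (X : PowerSeries ℤ) ^ (N + 1) ∣ X ^ ((2 * (n - j) + 2) + j ^ 2) := pow_dvd_pow X hle
        _ = X ^ (2 * (n - j) + 2) * X ^ (j ^ 2) := pow_add X _ _
        _ ∣ X ^ (2 * (n - j) + 2) * B * X ^ (j ^ 2) := ⟨B, by ring⟩
    have : PowerSeries.coeff (R := ℤ) N (X ^ (2 * (n - j) + 2) * B * X ^ (j ^ 2)) = 0 := by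
      rw [PowerSeries.X_pow_dvd_iff] at hdvd
      exact hdvd N (Nat.lt_succ_self N)
    rw [this, add_zero]
  rw [Finset.sum_congr rfl key, sum_dd_eval hn]

lemma Hmul : HinfS ℤ * qPochInf ℤ 1 * qPochInf ℤ 4 = qPochInf ℤ 2 ^ 2 := by
  ext N
  have hn : N < N + 1 := Nat.lt_succ_self N
  have c1 : CEq N (HinfS ℤ * qPochInf ℤ 1 * qPochInf ℤ 4)
      (Hfin ℤ (N + 1) * pp ℤ 1 (2 * (N + 1)) * pp ℤ 4 (N + 1)) :=
    ((ceq_HinfS hn).mul (ceq_qPochInf (by norm_num) (show N < 2 * (N + 1) by omega))).mul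
      (ceq_qPochInf (by norm_num) hn)
  have c2 : CEq N (qPochInf ℤ 2 ^ 2) (pp ℤ 2 (N + 1) * pp ℤ 2 (2 * (N + 1))) := by
    intro k hk
    rw [pow_two]
    exact (ceq_qPochInf (by norm_num) hn).mul
      (ceq_qPochInf (by norm_num) (show N < 2 * (N + 1) by omega)) k hk
  rw [c1 N le_rfl, c2 N le_rfl]
  have : Hfin ℤ (N + 1) * pp ℤ 1 (2 * (N + 1)) * pp ℤ 4 (N + 1)
      = pp ℤ 2 (N + 1) * pp ℤ 2 (2 * (N + 1)) := by
    rw [split1, split2, ← split3]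
    ring
  rw [this]

lemma bigT : Phi * qPochInf ℤ 1 ^ 2 * qPochInf ℤ 4 ^ 2 = qPochInf ℤ 2 ^ 5 := by
  calc Phi * qPochInf ℤ 1 ^ 2 * qPochInf ℤ 4 ^ 2
      = (qPochInf ℤ 2 * HinfS ℤ ^ 2) * qPochInf ℤ 1 ^ 2 * qPochInf ℤ 4 ^ 2 := by rw [Phi_eq]
    _ = qPochInf ℤ 2 * (HinfS ℤ * qPochInf ℤ 1 * qPochInf ℤ 4) ^ 2 := by ring
    _ = qPochInf ℤ 2 * (qPochInf ℤ 2 ^ 2) ^ 2 := by rw [Hmul]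
    _ = qPochInf ℤ 2 ^ 5 := by ring


/-- even support -/
def Ev (A : PowerSeries R) : Prop := ∀ k, k % 2 = 1 → coeff (R := R) k A = 0

lemma Ev.mul {A B : PowerSeries R} (hA : Ev A) (hB : Ev B) : Ev (A * B) := by
  intro k hk
  rw [coeff_mul]
  refine Finset.sum_eq_zero fun p hp => ?_
  rw [Finset.HasAntidiagonal.mem_antidiagonal] at hp
  rcases Nat.mod_two_eq_zero_or_one p.1 with h1 | h1
  · rw [hB p.2 (by omega), mul_zero]
  · rw [hA p.1 h1, zero_mul]

lemma Ev.one : Ev (1 : PowerSeries R) := by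
  intro k hk
  rw [PowerSeries.coeff_one, if_neg (by omega)]

lemma Ev.pow {A : PowerSeries R} (hA : Ev A) (j : ℕ) : Ev (A ^ j) := by
  induction j with
  | zero => simpa using Ev.one
  | succ j ih => rw [pow_succ]; exact ih.mul hA

lemma Ev.sub {A B : PowerSeries R} (hA : Ev A) (hB : Ev B) : Ev (A - B) := by
  intro k hk
  rw [map_sub, hA k hk, hB k hk, sub_zero]

lemma Ev.one_sub_X_pow {e : ℕ} (he : e % 2 = 0) : Ev ((1 : PowerSeries R) - X ^ e) := by
  intro k hk
  rw [map_sub, PowerSeries.coeff_one, PowerSeries.coeff_X_pow, if_neg (by omega),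
    if_neg (by omega), sub_zero]

lemma Ev_pp (t L : ℕ) : Ev (pp R (2 * t) L) := by
  induction L with
  | zero => simpa [pp] using Ev.one (R := R)
  | succ L ih =>
      rw [pp, Finset.prod_range_succ, ← pp]
      refine ih.mul (Ev.one_sub_X_pow ?_)
      have : 2 ∣ 2 * t * (L + 1) := ⟨t * (L + 1), by ring⟩
      omega

lemma Ev_qPochInf (t : ℕ) : Ev (qPochInf R (2 * t)) := by
  intro k hk
  rw [coeff_qPochInf]
  exact Ev_pp t (k + 1) k hk

lemma Ev.inv {A B : PowerSeries R} (hA : Ev A) (h0 : PowerSeries.constantCoeff (R := R) A = 1)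
    (hAB : A * B = 1) : Ev B := by
  intro k
  induction k using Nat.strong_induction_on with
  | _ k ih =>
      intro hk
      have h1 : coeff (R := R) k (A * B) = 0 := by
        rw [hAB, PowerSeries.coeff_one, if_neg (by omega)]
      rw [coeff_mul] at h1
      rw [Finset.sum_eq_single_of_mem (0, k) (by simp)] at h1
      · rwa [PowerSeries.coeff_zero_eq_constantCoeff, h0, one_mul] at h1
      · intro p hp hne
        rw [Finset.HasAntidiagonal.mem_antidiagonal] at hp
        rcases Nat.mod_two_eq_zero_or_one p.1 with he | ho
        · by_cases hp1 : p.1 = 0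
          · exact absurd (Prod.ext_iff.mpr ⟨hp1, by omega⟩) hne
          · rw [ih p.2 (by omega) (by omega), mul_zero]
        · rw [hA p.1 ho, zero_mul]

lemma map_pp {S : Type*} [CommRing S] (f : R →+* S) (h L : ℕ) :
    PowerSeries.map f (pp R h L) = pp S h L := by
  rw [pp, pp, map_prod]
  refine Finset.prod_congr rfl fun k _ => ?_
  rw [map_sub, map_one, map_pow, PowerSeries.map_X]

lemma map_qPochInf {S : Type*} [CommRing S] (f : R →+* S) (h : ℕ) :
    PowerSeries.map f (qPochInf R h) = qPochInf S h := by
  ext n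
  rw [PowerSeries.coeff_map, coeff_qPochInf, coeff_qPochInf, ← map_pp f,
    PowerSeries.coeff_map]

lemma constantCoeff_qPochInf {h : ℕ} (hh : 1 ≤ h) :
    PowerSeries.constantCoeff (R := R) (qPochInf R h) = 1 := by
  rw [← PowerSeries.coeff_zero_eq_constantCoeff_apply, coeff_qPochInf,
    PowerSeries.coeff_zero_eq_constantCoeff_apply, constantCoeff_pp hh]

lemma isUnit_qPochInf {h : ℕ} (hh : 1 ≤ h) : IsUnit (qPochInf R h) := by
  rw [PowerSeries.isUnit_iff_constantCoeff, constantCoeff_qPochInf hh]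
  exact isUnit_one

lemma pow16_fact {S : Type*} [CommRing S] (h16 : (16 : S) = 0) (y : S) :
    (1 - y) ^ 16 = (1 - y ^ 2) ^ 8 := by
  linear_combination (-y + 8*y^2 - 35*y^3 + 112*y^4 - 273*y^5 + 504*y^6 - 715*y^7 + 800*y^8
    - 715*y^9 + 504*y^10 - 273*y^11 + 112*y^12 - 35*y^13 + 8*y^14 - y^15) * h16

lemma pow8_fact {S : Type*} [CommRing S] (h8 : (8 : S) = 0) (y : S) :
    (1 - y) ^ 8 = (1 - y ^ 2) ^ 4 := by
  linear_combination (-y + 4*y^2 - 7*y^3 + 8*y^4 - 7*y^5 + 4*y^6 - y^7) * h8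

lemma sixteen_eq_zero : (16 : PowerSeries (ZMod 16)) = 0 := by
  have h0 : ((16 : ℕ) : ZMod 16) = 0 := by decide
  have h1 : ((16 : ℕ) : PowerSeries (ZMod 16)) = PowerSeries.C (R := ZMod 16) ((16 : ℕ) : ZMod 16) :=
    (map_natCast (PowerSeries.C (R := ZMod 16)) 16).symm
  rw [h0, map_zero] at h1
  exact_mod_cast h1

lemma eight_eq_zero : (8 : PowerSeries (ZMod 8)) = 0 := by
  have h0 : ((8 : ℕ) : ZMod 8) = 0 := by decide
  have h1 : ((8 : ℕ) : PowerSeries (ZMod 8)) = PowerSeries.C (R := ZMod 8) ((8 : ℕ) : ZMod 8) :=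
    (map_natCast (PowerSeries.C (R := ZMod 8)) 8).symm
  rw [h0, map_zero] at h1
  exact_mod_cast h1

lemma f2_pow16 : (qPochInf (ZMod 16) 2) ^ 16 = (qPochInf (ZMod 16) 4) ^ 8 := by
  ext N
  rw [((ceq_qPochInf (by norm_num) (Nat.lt_succ_self N)).pow 16) N le_rfl,
    ((ceq_qPochInf (by norm_num) (Nat.lt_succ_self N)).pow 8) N le_rfl]
  refine congrArg (fun z => PowerSeries.coeff (R := (ZMod 16)) N z) ?_
  rw [pp, pp, ← Finset.prod_pow, ← Finset.prod_pow]
  refine Finset.prod_congr rfl fun k _ => ?_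
  rw [pow16_fact sixteen_eq_zero (X ^ (2 * (k + 1))), ← pow_mul,
    show 2 * (k + 1) * 2 = 4 * (k + 1) by ring]

lemma f2_pow8 : (qPochInf (ZMod 8) 2) ^ 8 = (qPochInf (ZMod 8) 4) ^ 4 := by
  ext N
  rw [((ceq_qPochInf (by norm_num) (Nat.lt_succ_self N)).pow 8) N le_rfl,
    ((ceq_qPochInf (by norm_num) (Nat.lt_succ_self N)).pow 4) N le_rfl]
  refine congrArg (fun z => PowerSeries.coeff (R := (ZMod 8)) N z) ?_
  rw [pp, pp, ← Finset.prod_pow, ← Finset.prod_pow]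
  refine Finset.prod_congr rfl fun k _ => ?_
  rw [pow8_fact eight_eq_zero (X ^ (2 * (k + 1))), ← pow_mul,
    show 2 * (k + 1) * 2 = 4 * (k + 1) by ring]

noncomputable def Ysq : PowerSeries ℤ :=
  PowerSeries.mk fun n => if n ≠ 0 ∧ Nat.sqrt n * Nat.sqrt n = n then 1 else 0

lemma Phi_split : Phi = 1 + Ysq + Ysq := by
  ext k
  rw [map_add, map_add, Phi, Ysq, PowerSeries.coeff_mk, PowerSeries.coeff_mk,
    PowerSeries.coeff_one]
  rcases Nat.eq_zero_or_pos k with rfl | hk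
  · norm_num
  · have hk0 : ¬ (k = 0) := by omega
    by_cases hs : Nat.sqrt k * Nat.sqrt k = k
    · rw [if_neg hk0, if_neg hk0, if_pos hs, if_pos (show k ≠ 0 ∧ Nat.sqrt k * Nat.sqrt k = k
          from ⟨hk0, hs⟩)]
      norm_num
    · rw [if_neg hk0, if_neg hk0, if_neg hs,
        if_neg (show ¬ (k ≠ 0 ∧ Nat.sqrt k * Nat.sqrt k = k) from fun hc => hs hc.2)]
      norm_num

lemma zmod16_two_mul (a : ZMod 16)
    (h : ZMod.castHom (show (8:ℕ) ∣ 16 by norm_num) (ZMod 8) a = 0) : 2 * a = 0 := by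
  revert a; decide


end OC

open PowerSeries OC in
/-- For all `m, n ≥ 0` and each `w ∈ {3, 5, 7}`,
`a̅_{8m+3}(8n + w) ≡ 0 (mod 16)`. -/
theorem overcubic_eight_vanish_odd_residues (abar : ℕ → ℕ → ℕ)
    (habar : IsGenOvercubic abar) (m n w : ℕ) (hw : w ∈ ({3, 5, 7} : Finset ℕ)) :
    abar (8 * m + 3) (8 * n + w) ≡ 0 [MOD 16] := by
  simp only [Finset.mem_insert, Finset.mem_singleton] at hw
  set e := 8 * n + w with hedef
  have hw8 : e % 8 = 3 ∨ e % 8 = 5 ∨ e % 8 = 7 := by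
    rcases hw with rfl | rfl | rfl <;> omega
  set R := ZMod 16
  set ρ : ℤ →+* ZMod 16 := Int.castRingHom (ZMod 16) with hρ
  have H := habar (8 * m + 3) (by omega)
  have H16 := congrArg (PowerSeries.map ρ) H
  simp only [map_mul, map_pow, map_qPochInf] at H16
  set A := PowerSeries.map ρ (PowerSeries.mk fun k => (abar (8 * m + 3) k : ℤ)) with hA
  rw [show 2 * (8 * m + 3) = 16 * m + 6 by ring, show 8 * m + 3 - 1 = 8 * m + 2 by omega] at H16
  have e2 : (qPochInf (ZMod 16) 2) ^ (16 * m + 6)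
      = ((qPochInf (ZMod 16) 4) ^ 8) ^ m * qPochInf (ZMod 16) 2 ^ 6 := by
    rw [← f2_pow16, ← pow_mul, ← pow_add]
  have e4 : (qPochInf (ZMod 16) 4) ^ (8 * m + 2)
      = ((qPochInf (ZMod 16) 4) ^ 8) ^ m * qPochInf (ZMod 16) 4 ^ 2 := by
    rw [← pow_mul, ← pow_add]
  rw [e2, e4] at H16
  have hu : IsUnit (((qPochInf (ZMod 16) 4) ^ 8) ^ m) :=
    ((isUnit_qPochInf (by norm_num)).pow 8).pow m
  have H2 : A * qPochInf (ZMod 16) 1 ^ 2 * qPochInf (ZMod 16) 2 ^ 6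
      = qPochInf (ZMod 16) 4 ^ 2 * qPochInf (ZMod 16) 2 ^ 3 := by
    apply hu.mul_left_cancel
    linear_combination H16
  have T16 := congrArg (PowerSeries.map ρ) bigT
  simp only [map_mul, map_pow, map_qPochInf] at T16
  set Φ := PowerSeries.map ρ Phi with hPhi16
  have H3 : A * qPochInf (ZMod 16) 2 ^ 8 = Φ * qPochInf (ZMod 16) 4 ^ 4 := by
    have hu3 : IsUnit (qPochInf (ZMod 16) 1 ^ 2 * qPochInf (ZMod 16) 4 ^ 2) :=
      ((isUnit_qPochInf (by norm_num)).pow 2).mul ((isUnit_qPochInf (by norm_num)).pow 2)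
    apply hu3.mul_left_cancel
    linear_combination (qPochInf (ZMod 16) 2 ^ 2 * qPochInf (ZMod 16) 4 ^ 2) * H2
      - (qPochInf (ZMod 16) 4 ^ 4) * T16
  have hconst : PowerSeries.constantCoeff (R := (ZMod 16)) (qPochInf (ZMod 16) 2) = 1 :=
    constantCoeff_qPochInf (by norm_num)
  set V : PowerSeries (ZMod 16) := PowerSeries.invOfUnit (qPochInf (ZMod 16) 2) 1 with hV
  have hV1 : qPochInf (ZMod 16) 2 * V = 1 :=
    PowerSeries.mul_invOfUnit _ _ (by rw [hconst]; rfl)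
  have hpow1 : qPochInf (ZMod 16) 2 ^ 8 * V ^ 8 = 1 := by
    rw [← mul_pow, hV1, one_pow]
  set Δ := qPochInf (ZMod 16) 4 ^ 4 - qPochInf (ZMod 16) 2 ^ 8 with hΔ
  have hAeq : A = Φ + Δ * (Φ * V ^ 8) := by
    calc A = A * (qPochInf (ZMod 16) 2 ^ 8 * V ^ 8) := by rw [hpow1, mul_one]
      _ = (A * qPochInf (ZMod 16) 2 ^ 8) * V ^ 8 := by ring
      _ = (Φ * qPochInf (ZMod 16) 4 ^ 4) * V ^ 8 := by rw [H3]
      _ = Φ * (qPochInf (ZMod 16) 2 ^ 8 * V ^ 8) + Δ * (Φ * V ^ 8) := by rw [hΔ]; ring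
      _ = Φ + Δ * (Φ * V ^ 8) := by rw [hpow1, mul_one]
  -- coefficient of Φ at e vanishes
  have hPhiZ : PowerSeries.coeff (R := ℤ) e Phi = 0 := by
    rw [Phi, PowerSeries.coeff_mk, if_neg (by omega), if_neg]
    intro hsq
    have h1 : Nat.sqrt e % 8 < 8 := Nat.mod_lt _ (by norm_num)
    have h2 : (Nat.sqrt e % 8) * (Nat.sqrt e % 8) % 8 = e % 8 := by
      rw [← Nat.mul_mod, hsq]
    generalize hr : Nat.sqrt e % 8 = r at h1 h2
    interval_cases r <;> omega
  have hPhi0 : PowerSeries.coeff (R := (ZMod 16)) e Φ = 0 := by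
    rw [hPhi16, PowerSeries.coeff_map, hPhiZ, map_zero]
  -- Δ coefficients are killed by 2
  have hΔ2 : ∀ i, 2 * PowerSeries.coeff (R := (ZMod 16)) i Δ = 0 := by
    intro i
    have hmap : PowerSeries.map (ZMod.castHom (show (8:ℕ) ∣ 16 by norm_num) (ZMod 8)) Δ = 0 := by
      rw [hΔ, map_sub, map_pow, map_pow, map_qPochInf, map_qPochInf, sub_eq_zero]
      exact f2_pow8.symm
    have : (ZMod.castHom (show (8:ℕ) ∣ 16 by norm_num) (ZMod 8))
        (PowerSeries.coeff (R := (ZMod 16)) i Δ) = 0 := by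
      rw [← PowerSeries.coeff_map, hmap, map_zero]
    exact zmod16_two_mul _ this
  -- Δ is evenly supported
  have hΔev : Ev Δ := ((Ev_qPochInf (R := ZMod 16) 2).pow 4).sub ((Ev_qPochInf (R := ZMod 16) 1).pow 8)
  -- V is evenly supported
  have hVev : Ev V := Ev.inv (Ev_qPochInf (R := ZMod 16) 1) hconst hV1
  have he2 : e % 2 = 1 := by omega
  -- the correction term vanishes at e
  have hmain : PowerSeries.coeff (R := (ZMod 16)) e (Δ * (Φ * V ^ 8)) = 0 := by
    rw [PowerSeries.coeff_mul]
    refine Finset.sum_eq_zero fun p hp => ?_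
    rw [Finset.HasAntidiagonal.mem_antidiagonal] at hp
    rcases Nat.mod_two_eq_zero_or_one p.1 with h1 | h1
    · have hodd : p.2 % 2 = 1 := by omega
      have hz : ∃ z, PowerSeries.coeff (R := (ZMod 16)) p.2 (Φ * V ^ 8) = 2 * z := by
        have hPhiSplit : Φ = 1 + PowerSeries.map ρ Ysq + PowerSeries.map ρ Ysq := by
          rw [hPhi16, Phi_split]
          simp only [map_add, map_one]
        refine ⟨PowerSeries.coeff (R := (ZMod 16)) p.2 (PowerSeries.map ρ Ysq * V ^ 8), ?_⟩
        rw [hPhiSplit, show (1 + PowerSeries.map ρ Ysq + PowerSeries.map ρ Ysq) * V ^ 8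
          = V ^ 8 + (PowerSeries.map ρ Ysq * V ^ 8 + PowerSeries.map ρ Ysq * V ^ 8) from by ring,
          map_add, map_add]
        rw [(hVev.pow 8) p.2 hodd]
        ring
      obtain ⟨z, hz⟩ := hz
      rw [hz, show PowerSeries.coeff (R := (ZMod 16)) p.1 Δ * (2 * z)
        = (2 * PowerSeries.coeff (R := (ZMod 16)) p.1 Δ) * z from by ring, hΔ2, zero_mul]
    · rw [hΔev p.1 h1, zero_mul]
  have hAe : PowerSeries.coeff (R := (ZMod 16)) e A = 0 := by
    rw [hAeq, map_add, hPhi0, hmain, add_zero]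
  have hcast : ((abar (8 * m + 3) e : ℤ) : ZMod 16) = 0 := by
    rw [← hAe, hA, PowerSeries.coeff_map, PowerSeries.coeff_mk]
    rfl
  have hdvd : (16 : ℤ) ∣ (abar (8 * m + 3) e : ℤ) :=
    (ZMod.intCast_zmod_eq_zero_iff_dvd _ _).mp hcast
  have hdvdN : (16 : ℕ) ∣ abar (8 * m + 3) e := by exact_mod_cast hdvd
  exact (Nat.modEq_zero_iff_dvd).mpr hdvdN
end

section
/- For every integer m ≥ 0, the following identity of formal power series holds: Σ_{n≥0} a̅_{2m+1}(2n+1) q^n = 2 · f_2^{2m+2} f_8^2 / (f_1^{4m+4} f_4); that is, for every n ≥ 0, a̅_{2m+1}(2n+1) equals twice the coefficient of q^n in (q^2;q^2)_∞^{2m+2} (q^8;q^8)_∞^2 / ((q;q)_∞^{4m+4} (q^4;q^4)_∞). -/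
noncomputable section
open PowerSeries Finset

abbrev QX := PowerSeries ℚ

/-- congruence mod X^(n+1) -/
def Cng (n : ℕ) (f g : QX) : Prop := (X : QX)^(n+1) ∣ f - g

lemma cng_def {n : ℕ} {f g : QX} : Cng n f g ↔ (X : QX)^(n+1) ∣ f - g := Iff.rfl

lemma cng_iff {n : ℕ} {f g : QX} : Cng n f g ↔ ∀ i ≤ n, coeff (R := ℚ) i f = coeff (R := ℚ) i g := by
  rw [cng_def, PowerSeries.X_pow_dvd_iff]
  constructor
  · intro H i hi
    have := H i (by omega); rw [map_sub, sub_eq_zero] at this; exact this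
  · intro H i hi
    rw [map_sub, sub_eq_zero]; exact H i (by omega)

lemma Cng.refl {n : ℕ} (f : QX) : Cng n f f := by simp [cng_def]

lemma Cng.symm {n : ℕ} {f g : QX} (h : Cng n f g) : Cng n g f := by
  rw [cng_def] at *; exact (dvd_sub_comm).mp h

lemma Cng.trans {n : ℕ} {f g k : QX} (h1 : Cng n f g) (h2 : Cng n g k) : Cng n f k := by
  rw [cng_def] at *; simpa using dvd_add h1 h2

lemma Cng.add {n : ℕ} {f g f' g' : QX} (h1 : Cng n f g) (h2 : Cng n f' g') :
    Cng n (f + f') (g + g') := by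
  rw [cng_def] at *; convert dvd_add h1 h2 using 1; ring

lemma Cng.sub {n : ℕ} {f g f' g' : QX} (h1 : Cng n f g) (h2 : Cng n f' g') :
    Cng n (f - f') (g - g') := by
  rw [cng_def] at *; convert dvd_sub h1 h2 using 1; ring

lemma Cng.mul {n : ℕ} {f g f' g' : QX} (h1 : Cng n f g) (h2 : Cng n f' g') :
    Cng n (f * f') (g * g') := by
  rw [cng_def] at *
  have e : f * f' - g * g' = (f - g) * f' + g * (f' - g') := by ring
  rw [e]; exact dvd_add (h1.mul_right _) (h2.mul_left _)

lemma Cng.pow {n : ℕ} {f g : QX} (h : Cng n f g) (e : ℕ) : Cng n (f ^ e) (g ^ e) := by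
  induction e with
  | zero => simpa using Cng.refl 1
  | succ e ih => rw [pow_succ, pow_succ]; exact ih.mul h

lemma Cng.inv {n : ℕ} {f g : QX} (hf : constantCoeff (R := ℚ) f ≠ 0) (hg : constantCoeff (R := ℚ) g ≠ 0)
    (h : Cng n f g) : Cng n f⁻¹ g⁻¹ := by
  have h1 : g * g⁻¹ = 1 := PowerSeries.mul_inv_cancel g hg
  have h2 : f⁻¹ * f = 1 := PowerSeries.inv_mul_cancel f hf
  have key : f⁻¹ - g⁻¹ = f⁻¹ * (g - f) * g⁻¹ := by
    calc f⁻¹ - g⁻¹ = f⁻¹ * (g * g⁻¹) - (f⁻¹ * f) * g⁻¹ := by rw [h1, h2]; ring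
    _ = f⁻¹ * (g - f) * g⁻¹ := by ring
  rw [cng_def] at *
  rw [key]
  exact ((dvd_sub_comm.mp h).mul_left _).mul_right _

lemma eq_of_cng {f g : QX} (h : ∀ n, Cng n f g) : f = g := by
  ext n
  exact (cng_iff.mp (h n)) n le_rfl

lemma Cng.sum {n : ℕ} {s : Finset ℤ} {F G : ℤ → QX} (h : ∀ i ∈ s, Cng n (F i) (G i)) :
    Cng n (∑ i ∈ s, F i) (∑ i ∈ s, G i) := by
  classical
  induction s using Finset.induction with
  | empty => simpa using Cng.refl 0
  | insert _ _ hx ih =>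
    rw [Finset.sum_insert hx, Finset.sum_insert hx]
    exact (h _ (mem_insert_self _ _)).add (ih fun i hi => h i (mem_insert_of_mem hi))

lemma Cng.prod {n : ℕ} {s : Finset ℕ} {F G : ℕ → QX} (h : ∀ i ∈ s, Cng n (F i) (G i)) :
    Cng n (∏ i ∈ s, F i) (∏ i ∈ s, G i) := by
  classical
  induction s using Finset.induction with
  | empty => simpa using Cng.refl 1
  | insert _ _ hx ih =>
    rw [Finset.prod_insert hx, Finset.prod_insert hx]
    exact (h _ (mem_insert_self _ _)).mul (ih fun i hi => h i (mem_insert_of_mem hi))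

lemma cng_X_pow_mul {n m : ℕ} (f : QX) (hm : n < m) : Cng n ((X:QX)^m * f) 0 := by
  rw [cng_def, sub_zero]
  exact Dvd.dvd.mul_right (pow_dvd_pow _ (by omega)) f

lemma cng_zero_of_big {n m : ℕ} (hm : n < m) : Cng n ((X:QX)^m) 0 := by
  simpa using cng_X_pow_mul 1 hm

/-! ### truncated Pochhammer products -/

def pochT (h N : ℕ) : QX := ∏ k ∈ range N, (1 - (X:QX) ^ (h * (k+1)))

lemma constantCoeff_factor {m : ℕ} (hm : 1 ≤ m) :
    constantCoeff (R := ℚ) (1 - (X:QX)^m) = 1 := by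
  rw [map_sub, map_one, map_pow, constantCoeff_X, zero_pow (by omega), sub_zero]

lemma constantCoeff_pochT {h N : ℕ} (hh : 1 ≤ h) : constantCoeff (R := ℚ) (pochT h N) = 1 := by
  rw [pochT, map_prod, Finset.prod_eq_one]
  intro k _
  exact constantCoeff_factor (by nlinarith)

lemma pochT_ne {h N : ℕ} (hh : 1 ≤ h) : constantCoeff (R := ℚ) (pochT h N) ≠ 0 := by
  rw [constantCoeff_pochT hh]; norm_num

lemma pochT_split {h N M : ℕ} (hNM : N ≤ M) :
    pochT h M = pochT h N * ∏ k ∈ Ico N M, (1 - (X:QX) ^ (h * (k+1))) := by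
  rw [pochT, pochT, Finset.range_eq_Ico]
  rw [← Finset.prod_Ico_consecutive _ (Nat.zero_le N) hNM]
  rw [Finset.range_eq_Ico]

lemma cng_factor_one {n h m : ℕ} (hh : 1 ≤ h) (hm : n + 1 ≤ m) :
    Cng n (1 - (X:QX) ^ (h * m)) 1 := by
  have h0 : Cng n ((X:QX) ^ (h * m)) 0 := cng_zero_of_big (by nlinarith)
  have := (Cng.refl (n := n) 1).sub h0
  simpa using this

lemma Cng.prodFin {n : ℕ} {s : Finset ℕ} {F : ℕ → QX} (h : ∀ i ∈ s, Cng n (F i) 1) :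
    Cng n (∏ i ∈ s, F i) 1 := by
  have := Cng.prod (G := fun _ => (1:QX)) h
  simpa using this

lemma cng_Ico_one {n h N M : ℕ} (hh : 1 ≤ h) (hN : n + 1 ≤ N) :
    Cng n (∏ k ∈ Ico N M, (1 - (X:QX) ^ (h * (k+1)))) 1 := by
  apply Cng.prodFin
  intro k hk
  have hk' : N ≤ k := (Finset.mem_Ico.mp hk).1
  exact cng_factor_one hh (by omega)

lemma pochT_cng {n h N M : ℕ} (hh : 1 ≤ h) (hN : n + 1 ≤ N) (hNM : N ≤ M) :
    Cng n (pochT h M) (pochT h N) := by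
  rw [pochT_split hNM]
  have := (Cng.refl (n := n) (pochT h N)).mul (cng_Ico_one hh hN (M := M))
  simpa using this

lemma coeff_qPochInf (h n : ℕ) :
    coeff (R := ℚ) n (qPochInf ℚ h) = coeff (R := ℚ) n (pochT h (n+1)) := by
  rw [qPochInf, coeff_mk, pochT]

lemma qPochInf_cng {n h N : ℕ} (hh : 1 ≤ h) (hN : n + 1 ≤ N) :
    Cng n (qPochInf ℚ h) (pochT h N) := by
  rw [cng_iff]
  intro i hi
  rw [coeff_qPochInf]
  have h1 : Cng i (pochT h N) (pochT h (i+1)) := pochT_cng hh (by omega) (by omega)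
  exact ((cng_iff.mp h1) i le_rfl).symm

lemma constantCoeff_qPochInf {h : ℕ} (hh : 1 ≤ h) : constantCoeff (R := ℚ) (qPochInf ℚ h) = 1 := by
  have := coeff_qPochInf h 0
  rw [← coeff_zero_eq_constantCoeff] at *
  rw [this, coeff_zero_eq_constantCoeff, constantCoeff_pochT hh]

lemma qPochInf_ne {h : ℕ} (hh : 1 ≤ h) : constantCoeff (R := ℚ) (qPochInf ℚ h) ≠ 0 := by
  rw [constantCoeff_qPochInf hh]; norm_num

/-! ### parity splits and rescale -/

def hodd (h N : ℕ) : QX := ∏ k ∈ range N, (1 - (X:QX) ^ (h * (2*k+1)))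
def hplus (h N : ℕ) : QX := ∏ k ∈ range N, (1 + (X:QX) ^ (h * (2*k+1)))
def pa (h N : ℕ) : QX := ∏ k ∈ range N, (1 + (X:QX) ^ (h * (k+1)))

lemma pochT_split_parity (h N : ℕ) (hh : 1 ≤ h) :
    pochT h (2*N) = hodd h N * pochT (2*h) N := by
  induction N with
  | zero => simp [pochT, hodd]
  | succ N ih =>
    have e1 : 2*(N+1) = (2*N) + 1 + 1 := by ring
    have e2 : h * (2*N+1+1) = 2*h*(N+1) := by ring
    rw [e1, pochT, Finset.prod_range_succ, Finset.prod_range_succ, ← pochT, ih]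
    rw [show hodd h (N+1) = hodd h N * (1 - (X:QX)^(h*(2*N+1))) from by
      rw [hodd, Finset.prod_range_succ, ← hodd]]
    rw [show pochT (2*h) (N+1) = pochT (2*h) N * (1 - (X:QX)^(2*h*(N+1))) from by
      rw [pochT, Finset.prod_range_succ, ← pochT]]
    rw [e2]
    ring

lemma pochT_mul_pa (h N : ℕ) :
    pochT h N * pa h N = pochT (2*h) N := by
  rw [pochT, pa, pochT, ← Finset.prod_mul_distrib]
  apply Finset.prod_congr rfl
  intro k _
  have e : 2*h*(k+1) = h*(k+1) + h*(k+1) := by ring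
  rw [e, pow_add]
  ring

lemma hodd_mul_hplus (h N : ℕ) :
    hodd h N * hplus h N = hodd (2*h) N := by
  rw [hodd, hplus, hodd, ← Finset.prod_mul_distrib]
  apply Finset.prod_congr rfl
  intro k _
  have e : 2*h*(2*k+1) = h*(2*k+1) + h*(2*k+1) := by ring
  rw [e, pow_add]
  ring

/-- rescale by -1 -/
def sg : QX →+* QX := PowerSeries.rescale (-1 : ℚ)

lemma coeff_sg (n : ℕ) (f : QX) : coeff (R := ℚ) n (sg f) = (-1)^n * coeff (R := ℚ) n f := by
  rw [sg, PowerSeries.coeff_rescale]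

lemma sg_X : sg (X : QX) = -X := by
  ext n
  rw [coeff_sg]
  rcases eq_or_ne n 1 with rfl | hn
  · simp
  · simp [PowerSeries.coeff_X, hn]

lemma Cng.sg {n : ℕ} {f g : QX} (h : Cng n f g) : Cng n (sg f) (sg g) := by
  rw [cng_iff] at *
  intro i hi
  rw [coeff_sg, coeff_sg, h i hi]

lemma sg_even_factor (j : ℕ) : sg (1 - (X:QX)^(2*j)) = 1 - (X:QX)^(2*j) := by
  rw [map_sub, map_one, map_pow, sg_X, Even.neg_pow (even_two_mul j)]

lemma sg_odd_factor (j : ℕ) : sg (1 - (X:QX)^(2*j+1)) = 1 + (X:QX)^(2*j+1) := by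
  rw [map_sub, map_one, map_pow, sg_X, Odd.neg_pow ⟨j, by ring⟩, sub_neg_eq_add]

lemma sg_pochT_even (h N : ℕ) : sg (pochT (2*h) N) = pochT (2*h) N := by
  rw [pochT, map_prod]
  apply Finset.prod_congr rfl
  intro k _
  have e : 2*h*(k+1) = 2*(h*(k+1)) := by ring
  rw [e, sg_even_factor]

lemma sg_hodd_one (N : ℕ) : sg (hodd 1 N) = hplus 1 N := by
  rw [hodd, hplus, map_prod]
  apply Finset.prod_congr rfl
  intro k _
  have e : 1*(2*k+1) = 2*k+1 := by ring
  rw [e, sg_odd_factor]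

lemma sg_qPochInf_even (h : ℕ) (hh : 1 ≤ h) : sg (qPochInf ℚ (2*h)) = qPochInf ℚ (2*h) := by
  apply eq_of_cng
  intro n
  have h1 : Cng n (qPochInf ℚ (2*h)) (pochT (2*h) (n+1)) := qPochInf_cng (by omega) le_rfl
  have h2 : Cng n (sg (pochT (2*h) (n+1))) (pochT (2*h) (n+1)) := by
    rw [sg_pochT_even]; exact Cng.refl _
  exact (h1.sg.trans h2).trans h1.symm

/-! ### elementary identity E1 : sg F1 * F1 * F4 = F2^3 -/

lemma E1 : sg (qPochInf ℚ 1) * qPochInf ℚ 1 * qPochInf ℚ 4 = (qPochInf ℚ 2)^3 := by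
  apply eq_of_cng
  intro n
  set N := n + 1 with hN
  have c1 : Cng n (qPochInf ℚ 1) (pochT 1 (2*N)) := qPochInf_cng le_rfl (by omega)
  have c4 : Cng n (qPochInf ℚ 4) (pochT 4 N) := qPochInf_cng (by omega) (by omega)
  have c2a : Cng n ((qPochInf ℚ 2)^3) (pochT 2 (2*N) * (pochT 2 N * pochT 2 N)) := by
    have a : Cng n (qPochInf ℚ 2) (pochT 2 (2*N)) := qPochInf_cng (by omega) (by omega)
    have b : Cng n (qPochInf ℚ 2) (pochT 2 N) := qPochInf_cng (by omega) (by omega)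
    have : Cng n ((qPochInf ℚ 2)^3) (qPochInf ℚ 2 * (qPochInf ℚ 2 * qPochInf ℚ 2)) := by
      rw [pow_succ, pow_succ, pow_succ, pow_zero, one_mul, mul_assoc]
      exact Cng.refl _
    exact this.trans (a.mul (b.mul b))
  have key : sg (pochT 1 (2*N)) * pochT 1 (2*N) * pochT 4 N
      = pochT 2 (2*N) * (pochT 2 N * pochT 2 N) := by
    have s1 : pochT 1 (2*N) = hodd 1 N * pochT 2 N := by
      have := pochT_split_parity 1 N le_rfl
      rwa [show 2*1 = 2 by norm_num] at this
    have s2 : hodd 2 N * pochT 4 N = pochT 2 (2*N) := by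
      have := pochT_split_parity 2 N (by omega)
      rw [show 2*2 = 4 by norm_num] at this
      exact this.symm
    rw [s1, map_mul, sg_hodd_one, sg_pochT_even 1]
    rw [show 2*1 = 2 by norm_num]
    calc hplus 1 N * pochT 2 N * (hodd 1 N * pochT 2 N) * pochT 4 N
        = (hodd 1 N * hplus 1 N) * pochT 4 N * (pochT 2 N * pochT 2 N) := by ring
      _ = hodd 2 N * pochT 4 N * (pochT 2 N * pochT 2 N) := by
          rw [hodd_mul_hplus, show 2*1 = 2 by norm_num]
      _ = pochT 2 (2*N) * (pochT 2 N * pochT 2 N) := by rw [s2]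
  exact ((c1.sg.mul c1).mul c4).trans (key ▸ Cng.refl _) |>.trans c2a.symm

/-! ### the doubling homomorphism T : f(q) ↦ f(q²) -/

def TdFun (f : QX) : QX := PowerSeries.mk fun n => if 2 ∣ n then coeff (R := ℚ) (n/2) f else 0

lemma coeff_TdFun (n : ℕ) (f : QX) :
    coeff (R := ℚ) n (TdFun f) = if 2 ∣ n then coeff (R := ℚ) (n/2) f else 0 := by
  rw [TdFun, coeff_mk]

lemma TdFun_mul (f g : QX) : TdFun (f * g) = TdFun f * TdFun g := by
  ext n
  rw [coeff_TdFun, PowerSeries.coeff_mul]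
  rcases Nat.even_or_odd n with ⟨s, hs⟩ | hodd
  · have hdvd : 2 ∣ n := ⟨s, by omega⟩
    rw [if_pos hdvd]
    have hns : n / 2 = s := by omega
    rw [hns, PowerSeries.coeff_mul]
    symm
    apply Finset.sum_bij_ne_zero (fun p _ _ => ((p.1 / 2 : ℕ), (p.2 / 2 : ℕ)))
    · intro p hp hne
      have hps := Finset.HasAntidiagonal.mem_antidiagonal.mp hp
      have h1 : 2 ∣ p.1 := by
        by_contra hc
        rw [coeff_TdFun, if_neg hc, zero_mul] at hne; exact hne rfl
      have h2 : 2 ∣ p.2 := by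
        by_contra hc
        rw [coeff_TdFun p.2, if_neg hc, mul_zero] at hne; exact hne rfl
      exact Finset.HasAntidiagonal.mem_antidiagonal.mpr (by omega)
    · intro a h1a h2a b h1b h2b hab
      have ha1 : 2 ∣ a.1 := by
        by_contra hc; rw [coeff_TdFun, if_neg hc, zero_mul] at h2a; exact h2a rfl
      have ha2 : 2 ∣ a.2 := by
        by_contra hc; rw [coeff_TdFun a.2, if_neg hc, mul_zero] at h2a; exact h2a rfl
      have hb1 : 2 ∣ b.1 := by
        by_contra hc; rw [coeff_TdFun, if_neg hc, zero_mul] at h2b; exact h2b rfl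
      have hb2 : 2 ∣ b.2 := by
        by_contra hc; rw [coeff_TdFun b.2, if_neg hc, mul_zero] at h2b; exact h2b rfl
      obtain ⟨e1, e2⟩ := Prod.ext_iff.mp hab
      simp only at e1 e2
      exact Prod.ext_iff.mpr ⟨by omega, by omega⟩
    · intro b hb hbne
      have hbs := Finset.HasAntidiagonal.mem_antidiagonal.mp hb
      refine ⟨(2*b.1, 2*b.2), Finset.HasAntidiagonal.mem_antidiagonal.mpr (by omega), ?_, ?_⟩
      · simp only [coeff_TdFun]
        rw [if_pos ⟨b.1, rfl⟩, if_pos ⟨b.2, rfl⟩]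
        rw [Nat.mul_div_cancel_left _ (by norm_num : 0 < 2),
          Nat.mul_div_cancel_left _ (by norm_num : 0 < 2)]
        exact hbne
      · exact Prod.ext_iff.mpr ⟨by omega, by omega⟩
    · intro p h1p h2p
      have h1 : 2 ∣ p.1 := by
        by_contra hc; rw [coeff_TdFun, if_neg hc, zero_mul] at h2p; exact h2p rfl
      have h2 : 2 ∣ p.2 := by
        by_contra hc; rw [coeff_TdFun p.2, if_neg hc, mul_zero] at h2p; exact h2p rfl
      rw [coeff_TdFun, coeff_TdFun, if_pos h1, if_pos h2]
  · rw [if_neg (by rcases hodd with ⟨u,hu⟩; omega), PowerSeries.coeff_mul]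
    symm
    apply Finset.sum_eq_zero
    intro p hp
    have hps := Finset.HasAntidiagonal.mem_antidiagonal.mp hp
    rcases Nat.even_or_odd p.1 with he | ho
    · have : ¬ (2 ∣ p.2) := by
        rcases he with ⟨t, ht⟩; rcases hodd with ⟨u, hu⟩; omega
      rw [coeff_TdFun p.2, if_neg this, mul_zero]
    · have : ¬ (2 ∣ p.1) := by rcases ho with ⟨t, ht⟩; omega
      rw [coeff_TdFun, if_neg this, zero_mul]

lemma TdFun_one : TdFun 1 = 1 := by
  ext n
  rw [coeff_TdFun]
  rcases eq_or_ne n 0 with rfl | hn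
  · simp
  · split_ifs with h
    · rw [PowerSeries.coeff_one, PowerSeries.coeff_one, if_neg hn, if_neg (by omega)]
    · rw [PowerSeries.coeff_one, if_neg hn]

def Td : QX →+* QX where
  toFun := TdFun
  map_one' := TdFun_one
  map_mul' := TdFun_mul
  map_zero' := by ext n; simp [coeff_TdFun]
  map_add' := by intro f g; ext n; simp only [coeff_TdFun, map_add]; split_ifs <;> simp

lemma coeff_Td (n : ℕ) (f : QX) :
    coeff (R := ℚ) n (Td f) = if 2 ∣ n then coeff (R := ℚ) (n/2) f else 0 := coeff_TdFun n f

lemma coeff_Td_double (s : ℕ) (f : QX) : coeff (R := ℚ) (2*s) (Td f) = coeff (R := ℚ) s f := by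
  rw [coeff_Td, if_pos ⟨s, rfl⟩, Nat.mul_div_cancel_left _ (by norm_num)]

lemma Td_injective : Function.Injective Td := by
  intro f g h
  ext n
  have := congrArg (coeff (R := ℚ) (2*n)) h
  rwa [coeff_Td_double, coeff_Td_double] at this

lemma Td_X_pow (m : ℕ) : Td ((X:QX)^m) = (X:QX)^(2*m) := by
  ext n
  rw [coeff_Td, PowerSeries.coeff_X_pow, PowerSeries.coeff_X_pow]
  split_ifs <;> first | rfl | (exfalso; omega)

lemma Cng.td {n : ℕ} {f g : QX} (h : Cng n f g) : Cng n (Td f) (Td g) := by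
  rw [cng_iff] at *
  intro i hi
  rw [coeff_Td, coeff_Td]
  split_ifs with hd
  · exact h _ (by omega)
  · rfl

lemma Td_pochT (h N : ℕ) : Td (pochT h N) = pochT (2*h) N := by
  rw [pochT, pochT, map_prod]
  apply Finset.prod_congr rfl
  intro k _
  rw [map_sub, map_one, Td_X_pow]
  rw [show 2*(h*(k+1)) = 2*h*(k+1) by ring]

lemma Td_qPochInf (h : ℕ) (hh : 1 ≤ h) : Td (qPochInf ℚ h) = qPochInf ℚ (2*h) := by
  apply eq_of_cng
  intro n
  have c1 : Cng n (qPochInf ℚ h) (pochT h (n+1)) := qPochInf_cng hh le_rfl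
  have c2 : Cng n (qPochInf ℚ (2*h)) (pochT (2*h) (n+1)) := qPochInf_cng (by omega) le_rfl
  refine (c1.td.trans ?_).trans c2.symm
  rw [Td_pochT]
  exact Cng.refl _

lemma mul_inv_unique {u a b : QX} (ha : u * a = 1) (hb : u * b = 1) : a = b := by
  have hu : u ≠ 0 := by
    intro h; rw [h, zero_mul] at ha; exact one_ne_zero ha.symm
  have : u * a = u * b := by rw [ha, hb]
  exact mul_left_cancel₀ hu this

lemma Td_inv {f : QX} (hf : constantCoeff (R := ℚ) f ≠ 0) : Td f⁻¹ = (Td f)⁻¹ := by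
  have h1 : Td f * Td f⁻¹ = 1 := by
    rw [← map_mul, PowerSeries.mul_inv_cancel f hf, map_one]
  have hTf : constantCoeff (R := ℚ) (Td f) ≠ 0 := by
    rw [← coeff_zero_eq_constantCoeff] at *
    rw [show (0:ℕ) = 2*0 from rfl, coeff_Td_double]
    exact hf
  exact mul_inv_unique h1 (PowerSeries.mul_inv_cancel _ hTf)

/-! ### Gaussian binomials -/

lemma pochT_zero (H : ℕ) : pochT H 0 = 1 := by rw [pochT, Finset.range_zero, Finset.prod_empty]

lemma pochT_succ (H M : ℕ) : pochT H (M+1) = pochT H M * (1 - (X:QX)^(H*(M+1))) := by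
  rw [pochT, Finset.prod_range_succ, ← pochT]

lemma inv_one' : (1 : QX)⁻¹ = 1 := by
  have h : constantCoeff (R := ℚ) (1:QX) ≠ 0 := by rw [map_one]; norm_num
  have := PowerSeries.mul_inv_cancel (1:QX) h
  rwa [one_mul] at this

def GBn (H a b : ℕ) : QX := pochT H (a+b) * ((pochT H a)⁻¹ * (pochT H b)⁻¹)

lemma GBn_symm (H a b : ℕ) : GBn H a b = GBn H b a := by
  rw [GBn, GBn, Nat.add_comm a b]; ring

lemma GBn_zero_right (H a : ℕ) (hH : 1 ≤ H) : GBn H a 0 = 1 := by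
  rw [GBn, pochT_zero, inv_one', Nat.add_zero, mul_one]
  rw [mul_comm (pochT H a)]
  exact PowerSeries.inv_mul_cancel _ (pochT_ne hH)

lemma GBn_zero_left (H b : ℕ) (hH : 1 ≤ H) : GBn H 0 b = 1 := by
  rw [GBn_symm, GBn_zero_right H b hH]

lemma GBn_mul_poch (H : ℕ) {a b c d : ℕ} (hH : 1 ≤ H) (hac : a ≤ c) (hbd : b ≤ d) :
    GBn H a b * (pochT H c * pochT H d) =
      pochT H (a+b) * ((∏ k ∈ Ico a c, (1 - (X:QX)^(H*(k+1)))) *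
        (∏ k ∈ Ico b d, (1 - (X:QX)^(H*(k+1))))) := by
  have h1 : (pochT H a)⁻¹ * pochT H a = 1 := PowerSeries.inv_mul_cancel _ (pochT_ne hH)
  have h2 : (pochT H b)⁻¹ * pochT H b = 1 := PowerSeries.inv_mul_cancel _ (pochT_ne hH)
  rw [GBn, pochT_split hac, pochT_split hbd]
  calc pochT H (a+b) * ((pochT H a)⁻¹ * (pochT H b)⁻¹) *
      (pochT H a * (∏ k ∈ Ico a c, (1 - (X:QX)^(H*(k+1)))) *
       (pochT H b * (∏ k ∈ Ico b d, (1 - (X:QX)^(H*(k+1))))))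
      = pochT H (a+b) * ((∏ k ∈ Ico a c, (1 - (X:QX)^(H*(k+1)))) *
          (∏ k ∈ Ico b d, (1 - (X:QX)^(H*(k+1))))) *
          (((pochT H a)⁻¹ * pochT H a) * ((pochT H b)⁻¹ * pochT H b)) := by ring
    _ = _ := by rw [h1, h2, mul_one, mul_one]

lemma prod_Ico_self' (f : ℕ → QX) (a : ℕ) : ∏ k ∈ Ico a a, f k = 1 := by
  rw [Finset.Ico_self, Finset.prod_empty]

lemma prod_Ico_one (f : ℕ → QX) (a : ℕ) : ∏ k ∈ Ico a (a+1), f k = f a := by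
  rw [Finset.prod_Ico_succ_top (by omega), prod_Ico_self', one_mul]

lemma prod_Ico_two (f : ℕ → QX) (a : ℕ) : ∏ k ∈ Ico a (a+2), f k = f a * f (a+1) := by
  rw [show a+2 = (a+1)+1 from rfl, Finset.prod_Ico_succ_top (by omega), prod_Ico_one]

lemma GBn_mul_cancel (H a b : ℕ) (hH : 1 ≤ H) :
    GBn H a b * (pochT H a * pochT H b) = pochT H (a+b) := by
  have := GBn_mul_poch H hH (le_refl a) (le_refl b)
  rwa [prod_Ico_self', prod_Ico_self', mul_one, mul_one] at this

lemma pochT_ne_zero (H N : ℕ) (hH : 1 ≤ H) : pochT H N ≠ 0 := by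
  intro h
  have := pochT_ne (h := H) (N := N) hH
  rw [h, map_zero] at this
  exact this rfl

lemma dagger_nat (H a b : ℕ) (hH : 1 ≤ H) :
    GBn H (a+2) (b+2) = (1 + (X:QX)^(H*(a+b+3))) * GBn H (a+1) (b+1)
      + (X:QX)^(H*(b+2)) * GBn H a (b+2) + (X:QX)^(H*(a+2)) * GBn H (a+2) b := by
  have hD : pochT H (a+2) * pochT H (b+2) ≠ 0 :=
    mul_ne_zero (pochT_ne_zero H _ hH) (pochT_ne_zero H _ hH)
  apply mul_right_cancel₀ hD
  have e1 : GBn H (a+2) (b+2) * (pochT H (a+2) * pochT H (b+2)) = pochT H (a+b+4) := by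
    have := GBn_mul_cancel H (a+2) (b+2) hH
    rwa [show (a+2)+(b+2) = a+b+4 from by ring] at this
  have e2 : GBn H (a+1) (b+1) * (pochT H (a+2) * pochT H (b+2)) =
      pochT H (a+b+2) * ((1 - (X:QX)^(H*(a+2))) * (1 - (X:QX)^(H*(b+2)))) := by
    have := GBn_mul_poch H hH (show a+1 ≤ a+2 from by omega) (show b+1 ≤ b+2 from by omega)
    rw [show a+2 = (a+1)+1 from rfl, show b+2 = (b+1)+1 from rfl, prod_Ico_one, prod_Ico_one] at this
    rwa [show (a+1)+(b+1) = a+b+2 from by ring, show (a+1)+1 = a+2 from rfl,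
      show (b+1)+1 = b+2 from rfl] at this
  have e3 : GBn H a (b+2) * (pochT H (a+2) * pochT H (b+2)) =
      pochT H (a+b+2) * ((1 - (X:QX)^(H*(a+1))) * (1 - (X:QX)^(H*(a+2)))) := by
    have := GBn_mul_poch H hH (show a ≤ a+2 from by omega) (show b+2 ≤ b+2 from le_rfl)
    rw [prod_Ico_two, prod_Ico_self'] at this
    rwa [show a+(b+2) = a+b+2 from by ring, mul_one, show a+1+1 = a+2 from rfl] at this
  have e4 : GBn H (a+2) b * (pochT H (a+2) * pochT H (b+2)) =
      pochT H (a+b+2) * ((1 - (X:QX)^(H*(b+1))) * (1 - (X:QX)^(H*(b+2)))) := by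
    have := GBn_mul_poch H hH (show a+2 ≤ a+2 from le_rfl) (show b ≤ b+2 from by omega)
    rw [prod_Ico_two, prod_Ico_self'] at this
    rwa [show (a+2)+b = a+b+2 from by ring, one_mul, show b+1+1 = b+2 from rfl] at this
  have key : pochT H (a+b+4) =
      (1 + (X:QX)^(H*(a+b+3))) * (pochT H (a+b+2) * ((1 - (X:QX)^(H*(a+2))) * (1 - (X:QX)^(H*(b+2)))))
      + (X:QX)^(H*(b+2)) * (pochT H (a+b+2) * ((1 - (X:QX)^(H*(a+1))) * (1 - (X:QX)^(H*(a+2)))))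
      + (X:QX)^(H*(a+2)) * (pochT H (a+b+2) * ((1 - (X:QX)^(H*(b+1))) * (1 - (X:QX)^(H*(b+2))))) := by
    rw [show a+b+4 = (a+b+3)+1 from rfl, pochT_succ, show a+b+3 = (a+b+2)+1 from rfl, pochT_succ]
    simp only [pow_mul]
    ring
  linear_combination e1 + key - (1 + (X:QX)^(H*(a+b+3))) * e2
    - (X:QX)^(H*(b+2)) * e3 - (X:QX)^(H*(a+2)) * e4

def GB (H : ℕ) (a b : ℤ) : QX := if 0 ≤ a ∧ 0 ≤ b then GBn H a.toNat b.toNat else 0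

lemma GB_eq_GBn {H : ℕ} {a b : ℤ} (ha : 0 ≤ a) (hb : 0 ≤ b) :
    GB H a b = GBn H a.toNat b.toNat := if_pos ⟨ha, hb⟩

lemma GB_coe {H : ℕ} (a b : ℕ) : GB H (a:ℤ) (b:ℤ) = GBn H a b := by
  rw [GB_eq_GBn (by positivity) (by positivity), Int.toNat_natCast, Int.toNat_natCast]

lemma GB_neg_left {H : ℕ} {a b : ℤ} (h : a < 0) : GB H a b = 0 := if_neg (by omega)

lemma GB_neg_right {H : ℕ} {a b : ℤ} (h : b < 0) : GB H a b = 0 := if_neg (by omega)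

lemma GB_symm (H : ℕ) (a b : ℤ) : GB H a b = GB H b a := by
  rw [GB, GB]
  by_cases hab : 0 ≤ a ∧ 0 ≤ b
  · rw [if_pos hab, if_pos ⟨hab.2, hab.1⟩, GBn_symm]
  · rw [if_neg hab, if_neg (by tauto)]

lemma pochT_one (H : ℕ) : pochT H 1 = 1 - (X:QX)^(H*1) := by
  rw [pochT, Finset.prod_range_one]

lemma GBn_one_one (H : ℕ) (hH : 1 ≤ H) : GBn H 1 1 = 1 + (X:QX)^(H*1) := by
  have hD : pochT H 1 * pochT H 1 ≠ 0 :=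
    mul_ne_zero (pochT_ne_zero H _ hH) (pochT_ne_zero H _ hH)
  apply mul_right_cancel₀ hD
  have e1 : GBn H 1 1 * (pochT H 1 * pochT H 1) = pochT H 2 := GBn_mul_cancel H 1 1 hH
  rw [e1, show (2:ℕ) = 1+1 from rfl, pochT_succ, pochT_one]
  simp only [pow_mul]
  ring

lemma dagger_edge (H M : ℕ) (hH : 1 ≤ H) :
    GBn H (2*M+3) 1 = (1 + (X:QX)^(H*(2*M+3))) * GBn H (2*M+2) 0
      + (X:QX)^(H*1) * GBn H (2*M+1) 1 := by
  have hD : pochT H (2*M+3) * pochT H 1 ≠ 0 :=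
    mul_ne_zero (pochT_ne_zero H _ hH) (pochT_ne_zero H _ hH)
  apply mul_right_cancel₀ hD
  have e1 : GBn H (2*M+3) 1 * (pochT H (2*M+3) * pochT H 1) = pochT H (2*M+4) := by
    have := GBn_mul_cancel H (2*M+3) 1 hH
    rwa [show 2*M+3+1 = 2*M+4 from rfl] at this
  have e2 : GBn H (2*M+1) 1 * (pochT H (2*M+3) * pochT H 1) =
      pochT H (2*M+2) * ((1 - (X:QX)^(H*(2*M+2))) * (1 - (X:QX)^(H*(2*M+3)))) := by
    have := GBn_mul_poch H hH (show 2*M+1 ≤ 2*M+3 from by omega) (le_refl 1)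
    rw [show 2*M+3 = (2*M+1)+2 from by ring, prod_Ico_two, prod_Ico_self'] at this
    rwa [show 2*M+1+1 = 2*M+2 from rfl, show 2*M+2+1 = 2*M+3 from rfl, mul_one,
      show (2*M+1)+2 = 2*M+3 from by ring] at this
  have e3 : GBn H (2*M+2) 0 = 1 := GBn_zero_right H _ hH
  have key : pochT H (2*M+4) =
      (1 + (X:QX)^(H*(2*M+3))) * (pochT H (2*M+3) * pochT H 1)
      + (X:QX)^(H*1) * (pochT H (2*M+2) * ((1 - (X:QX)^(H*(2*M+2))) * (1 - (X:QX)^(H*(2*M+3))))) := by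
    rw [show 2*M+4 = (2*M+3)+1 from rfl, pochT_succ, show 2*M+3 = (2*M+2)+1 from rfl,
      pochT_succ, pochT_one]
    simp only [pow_mul]
    ring
  linear_combination e1 + key - (X:QX)^(H*1) * e2
    - (1 + (X:QX)^(H*(2*M+3))) * (pochT H (2*M+3) * pochT H 1) * e3

lemma dagger_pos (H N : ℕ) (hH : 1 ≤ H) (k : ℤ) (hk0 : 0 ≤ k) (hk2 : k ≤ (N:ℤ)+1) :
    GB H ((N:ℤ)+1+k) ((N:ℤ)+1-k) =
      (1 + (X:QX)^(H*(2*N+1))) * GB H ((N:ℤ)+k) ((N:ℤ)-k)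
      + (X:QX)^(H*((N:ℤ)-k+1).toNat) * GB H ((N:ℤ)+k-1) ((N:ℤ)-k+1)
      + (X:QX)^(H*((N:ℤ)+k+1).toNat) * GB H ((N:ℤ)+k+1) ((N:ℤ)-k-1) := by
  rcases lt_trichotomy k ((N:ℤ)) with hkN | hkN | hkN
  · -- interior : 0 ≤ k ≤ N-1
    obtain ⟨a, ha⟩ : ∃ a:ℕ, (N:ℤ)+k-1 = (a:ℤ) := ⟨((N:ℤ)+k-1).toNat, by omega⟩
    obtain ⟨b, hb⟩ : ∃ b:ℕ, (N:ℤ)-k-1 = (b:ℤ) := ⟨((N:ℤ)-k-1).toNat, by omega⟩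
    rw [GB_eq_GBn (by omega) (by omega), GB_eq_GBn (by omega) (by omega),
      GB_eq_GBn (by omega) (by omega), GB_eq_GBn (by omega) (by omega)]
    rw [show ((N:ℤ)+1+k).toNat = a+2 from by omega, show ((N:ℤ)+1-k).toNat = b+2 from by omega,
      show ((N:ℤ)+k).toNat = a+1 from by omega, show ((N:ℤ)-k).toNat = b+1 from by omega,
      show ((N:ℤ)+k-1).toNat = a from by omega, show ((N:ℤ)-k+1).toNat = b+2 from by omega,
      show ((N:ℤ)+k+1).toNat = a+2 from by omega, show ((N:ℤ)-k-1).toNat = b from by omega,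
      show 2*N+1 = a+b+3 from by omega]
    exact dagger_nat H a b hH
  · -- k = N
    subst hkN
    cases N with
    | zero =>
      rw [show ((0:ℕ):ℤ)+1+((0:ℕ):ℤ) = ((1:ℕ):ℤ) from by norm_num,
        show ((0:ℕ):ℤ)+1-((0:ℕ):ℤ) = ((1:ℕ):ℤ) from by norm_num,
        show ((0:ℕ):ℤ)+((0:ℕ):ℤ) = ((0:ℕ):ℤ) from by norm_num,
        show ((0:ℕ):ℤ)-((0:ℕ):ℤ) = ((0:ℕ):ℤ) from by norm_num,
        show ((0:ℕ):ℤ)-1 = (-1:ℤ) from by norm_num,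
        show ((0:ℕ):ℤ)+1 = ((1:ℕ):ℤ) from by norm_num]
      rw [GB_coe, GB_coe, GB_neg_left (show (-1:ℤ) < 0 from by norm_num),
        GB_neg_right (show (-1:ℤ) < 0 from by norm_num)]
      rw [GBn_one_one H hH, GBn_zero_right H 0 hH, Int.toNat_natCast]
      norm_num
    | succ M =>
      rw [show (((M+1:ℕ)):ℤ)+1+(((M+1:ℕ)):ℤ) = ((2*M+3:ℕ):ℤ) from by push_cast; ring,
        show (((M+1:ℕ)):ℤ)+1-(((M+1:ℕ)):ℤ) = ((1:ℕ):ℤ) from by push_cast; ring,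
        show (((M+1:ℕ)):ℤ)+(((M+1:ℕ)):ℤ) = ((2*M+2:ℕ):ℤ) from by push_cast; ring,
        show (((M+1:ℕ)):ℤ)-(((M+1:ℕ)):ℤ) = ((0:ℕ):ℤ) from by push_cast; ring,
        show ((0:ℕ):ℤ)-1 = (-1:ℤ) from by norm_num,
        show ((0:ℕ):ℤ)+1 = ((1:ℕ):ℤ) from by norm_num,
        show ((2*M+2:ℕ):ℤ)-1 = ((2*M+1:ℕ):ℤ) from by push_cast; ring,
        show ((2*M+2:ℕ):ℤ)+1 = ((2*M+3:ℕ):ℤ) from by push_cast; ring]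
      rw [GB_coe, GB_coe, GB_coe, GB_neg_right (show (-1:ℤ) < 0 from by norm_num)]
      rw [Int.toNat_natCast, Int.toNat_natCast,
        show 2*(M+1)+1 = 2*M+3 from by ring]
      rw [dagger_edge H M hH]
      ring
  · -- k = N+1
    have hk : k = (N:ℤ)+1 := by omega
    subst hk
    rw [show (N:ℤ)+1+((N:ℤ)+1) = ((2*N+2:ℕ):ℤ) from by push_cast; ring,
      show (N:ℤ)+1-((N:ℤ)+1) = ((0:ℕ):ℤ) from by push_cast; ring,
      show (N:ℤ)-((N:ℤ)+1) = (-1:ℤ) from by ring,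
      show (N:ℤ)+((N:ℤ)+1)-1 = ((2*N:ℕ):ℤ) from by push_cast; ring,
      show (-1:ℤ)+1 = ((0:ℕ):ℤ) from by norm_num,
      show (-1:ℤ)-1 = (-2:ℤ) from by norm_num,
      show (N:ℤ)+((N:ℤ)+1)+1 = ((2*N+2:ℕ):ℤ) from by push_cast; ring]
    rw [GB_coe, GB_coe, GB_neg_right (show (-1:ℤ) < 0 from by norm_num),
      GB_neg_right (show (-2:ℤ) < 0 from by norm_num)]
    rw [GBn_zero_right H _ hH, GBn_zero_right H _ hH, Int.toNat_natCast, Int.toNat_natCast]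
    ring

lemma dagger (H N : ℕ) (hH : 1 ≤ H) (k : ℤ) (hk1 : -(N:ℤ)-1 ≤ k) (hk2 : k ≤ (N:ℤ)+1) :
    GB H ((N:ℤ)+1+k) ((N:ℤ)+1-k) =
      (1 + (X:QX)^(H*(2*N+1))) * GB H ((N:ℤ)+k) ((N:ℤ)-k)
      + (X:QX)^(H*((N:ℤ)-k+1).toNat) * GB H ((N:ℤ)+k-1) ((N:ℤ)-k+1)
      + (X:QX)^(H*((N:ℤ)+k+1).toNat) * GB H ((N:ℤ)+k+1) ((N:ℤ)-k-1) := by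
  rcases le_or_gt 0 k with hk0 | hk0
  · exact dagger_pos H N hH k hk0 hk2
  · have h' := dagger_pos H N hH (-k) (by omega) (by omega)
    rw [show (N:ℤ)+1+(-k) = (N:ℤ)+1-k from by ring, show (N:ℤ)+1-(-k) = (N:ℤ)+1+k from by ring,
      show (N:ℤ)+(-k) = (N:ℤ)-k from by ring, show (N:ℤ)-(-k) = (N:ℤ)+k from by ring,
      ] at h'
    rw [GB_symm H ((N:ℤ)+1-k) ((N:ℤ)+1+k), GB_symm H ((N:ℤ)-k) ((N:ℤ)+k),
      GB_symm H ((N:ℤ)-k-1) ((N:ℤ)+k+1), GB_symm H ((N:ℤ)-k+1) ((N:ℤ)+k-1)] at h'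
    exact h'.trans (by ring)

/-! ### theta sums and finite Jacobi triple product -/

lemma eps_pow_parity {ε : ℚ} (hε : ε^2 = 1) {a b : ℕ} (hab : a % 2 = b % 2) : ε^a = ε^b := by
  have key : ∀ c : ℕ, ε^c = ε^(c % 2) := by
    intro c
    conv_lhs => rw [← Nat.div_add_mod c 2]
    rw [pow_add, pow_mul, hε, one_pow, one_mul]
  rw [key a, key b, hab]

def thTerm (h : ℕ) (ε : ℚ) (N : ℕ) (k : ℤ) : QX :=
  C (R := ℚ) (ε^k.natAbs) * ((X:QX)^(h*(k*k).toNat) * GB (2*h) ((N:ℤ)+k) ((N:ℤ)-k))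

def thSum (h : ℕ) (ε : ℚ) (N : ℕ) : QX := ∑ k ∈ Icc (-(N:ℤ)) (N:ℤ), thTerm h ε N k

lemma thTerm_zero_of_big {h : ℕ} {ε : ℚ} {N : ℕ} {k : ℤ} (hk : k < -(N:ℤ) ∨ (N:ℤ) < k) :
    thTerm h ε N k = 0 := by
  rcases hk with hk | hk
  · rw [thTerm, GB_neg_left (by omega), mul_zero, mul_zero]
  · rw [thTerm, GB_neg_right (by omega), mul_zero, mul_zero]

lemma sum_thTerm_ext {h : ℕ} {ε : ℚ} {N : ℕ} {a b : ℤ} (ha : a ≤ -(N:ℤ)) (hb : (N:ℤ) ≤ b) :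
    ∑ k ∈ Icc a b, thTerm h ε N k = thSum h ε N := by
  rw [thSum]
  symm
  apply Finset.sum_subset
  · intro x hx
    rw [Finset.mem_Icc] at *
    omega
  · intro x hx hnx
    rw [Finset.mem_Icc] at hx hnx
    push_neg at hnx
    apply thTerm_zero_of_big
    omega

lemma thSum_zero (h : ℕ) (ε : ℚ) (hh : 1 ≤ h) : thSum h ε 0 = 1 := by
  rw [thSum, show (((0:ℕ):ℤ)) = (0:ℤ) from rfl, show -(0:ℤ) = 0 from rfl,
    Finset.Icc_self, Finset.sum_singleton, thTerm]
  norm_num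
  rw [show (0:ℤ) = (((0:ℕ)):ℤ) from rfl, GB_coe, GBn_zero_right _ _ (by omega)]

lemma thSum_succ (h : ℕ) (hh : 1 ≤ h) (ε : ℚ) (hε : ε^2 = 1) (N : ℕ) :
    thSum h ε (N+1) = (1 + C (R := ℚ) ε * (X:QX)^(h*(2*N+1)))^2 * thSum h ε N := by
  have step1 : thSum h ε (N+1) =
      ∑ k ∈ Icc (-(N:ℤ)-1) ((N:ℤ)+1),
        ((1 + (X:QX)^(2*h*(2*N+1))) * thTerm h ε N k
          + (C (R := ℚ) ε * (X:QX)^(h*(2*N+1))) * thTerm h ε N (k-1)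
          + (C (R := ℚ) ε * (X:QX)^(h*(2*N+1))) * thTerm h ε N (k+1)) := by
    rw [thSum, show (-(((N+1):ℕ):ℤ)) = -(N:ℤ)-1 from by push_cast; ring,
      show ((((N+1):ℕ)):ℤ) = (N:ℤ)+1 from by push_cast; ring]
    apply Finset.sum_congr rfl
    intro k hk
    rw [Finset.mem_Icc] at hk
    have hdag := dagger (2*h) N (by omega) k (by omega) (by omega)
    rw [thTerm, show ((N+1:ℕ):ℤ) = (N:ℤ)+1 from by push_cast; ring, hdag]
    have e1 : (C (R := ℚ) (ε^k.natAbs) : QX) * ((X:QX)^(h*(k*k).toNat) *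
        ((1 + (X:QX)^(2*h*(2*N+1))) * GB (2*h) ((N:ℤ)+k) ((N:ℤ)-k)))
        = (1 + (X:QX)^(2*h*(2*N+1))) * thTerm h ε N k := by
      rw [thTerm]; ring
    have e2 : (C (R := ℚ) (ε^k.natAbs) : QX) * ((X:QX)^(h*(k*k).toNat) *
        ((X:QX)^(2*h*(((N:ℤ)-k+1).toNat)) * GB (2*h) ((N:ℤ)+k-1) ((N:ℤ)-k+1)))
        = (C (R := ℚ) ε * (X:QX)^(h*(2*N+1))) * thTerm h ε N (k-1) := by
      rw [thTerm, show (N:ℤ)+(k-1) = (N:ℤ)+k-1 from by ring,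
        show (N:ℤ)-(k-1) = (N:ℤ)-k+1 from by ring]
      obtain ⟨u, hu⟩ : ∃ u:ℕ, (k*k:ℤ) = u := ⟨(k*k).toNat, by
        rw [Int.toNat_of_nonneg (mul_self_nonneg k)]⟩
      obtain ⟨v, hv⟩ : ∃ v:ℕ, ((k-1)*(k-1):ℤ) = v := ⟨((k-1)*(k-1)).toNat, by
        rw [Int.toNat_of_nonneg (mul_self_nonneg _)]⟩
      obtain ⟨w, hw⟩ : ∃ w:ℕ, ((N:ℤ)-k+1) = w := ⟨((N:ℤ)-k+1).toNat, by
        rw [Int.toNat_of_nonneg (by omega)]⟩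
      have hrel : u + 2*w = v + (2*N+1) := by
        have hz : (k*k:ℤ) + 2*((N:ℤ)-k+1) = (k-1)*(k-1) + (2*(N:ℤ)+1) := by ring
        rw [hu, hv, hw] at hz
        exact_mod_cast hz
      have hX : (X:QX)^(h*(k*k).toNat) * (X:QX)^(2*h*(((N:ℤ)-k+1).toNat))
          = (X:QX)^(h*(2*N+1)) * (X:QX)^(h*(((k-1)*(k-1):ℤ)).toNat) := by
        rw [hu, hv, hw, Int.toNat_natCast, Int.toNat_natCast, Int.toNat_natCast,
          ← pow_add, ← pow_add]
        congr 1
        calc h*u + 2*h*w = h*(u+2*w) := by ring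
          _ = h*(v + (2*N+1)) := by rw [hrel]
          _ = h*(2*N+1) + h*v := by ring
      have hsg : (C (R := ℚ) ε : QX) * C (R := ℚ) (ε^((k-1).natAbs)) = C (R := ℚ) (ε^(k.natAbs)) := by
        rw [← map_mul]
        congr 1
        rw [show ε * ε^((k-1).natAbs) = ε^((k-1).natAbs + 1) from by ring]
        exact eps_pow_parity hε (by omega)
      calc (C (R := ℚ) (ε^k.natAbs) : QX) * ((X:QX)^(h*(k*k).toNat) *
          ((X:QX)^(2*h*(((N:ℤ)-k+1).toNat)) * GB (2*h) ((N:ℤ)+k-1) ((N:ℤ)-k+1)))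
          = ((X:QX)^(h*(k*k).toNat) * (X:QX)^(2*h*(((N:ℤ)-k+1).toNat))) *
            (C (R := ℚ) (ε^k.natAbs) * GB (2*h) ((N:ℤ)+k-1) ((N:ℤ)-k+1)) := by ring
        _ = ((X:QX)^(h*(2*N+1)) * (X:QX)^(h*(((k-1)*(k-1):ℤ)).toNat)) *
            ((C (R := ℚ) ε * C (R := ℚ) (ε^((k-1).natAbs))) * GB (2*h) ((N:ℤ)+k-1) ((N:ℤ)-k+1)) := by
            rw [hX, hsg]
        _ = _ := by ring
    have e3 : (C (R := ℚ) (ε^k.natAbs) : QX) * ((X:QX)^(h*(k*k).toNat) *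
        ((X:QX)^(2*h*(((N:ℤ)+k+1).toNat)) * GB (2*h) ((N:ℤ)+k+1) ((N:ℤ)-k-1)))
        = (C (R := ℚ) ε * (X:QX)^(h*(2*N+1))) * thTerm h ε N (k+1) := by
      rw [thTerm, show (N:ℤ)+(k+1) = (N:ℤ)+k+1 from by ring,
        show (N:ℤ)-(k+1) = (N:ℤ)-k-1 from by ring]
      obtain ⟨u, hu⟩ : ∃ u:ℕ, (k*k:ℤ) = u := ⟨(k*k).toNat, by
        rw [Int.toNat_of_nonneg (mul_self_nonneg k)]⟩
      obtain ⟨v, hv⟩ : ∃ v:ℕ, ((k+1)*(k+1):ℤ) = v := ⟨((k+1)*(k+1)).toNat, by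
        rw [Int.toNat_of_nonneg (mul_self_nonneg _)]⟩
      obtain ⟨w, hw⟩ : ∃ w:ℕ, ((N:ℤ)+k+1) = w := ⟨((N:ℤ)+k+1).toNat, by
        rw [Int.toNat_of_nonneg (by omega)]⟩
      have hrel : u + 2*w = v + (2*N+1) := by
        have hz : (k*k:ℤ) + 2*((N:ℤ)+k+1) = (k+1)*(k+1) + (2*(N:ℤ)+1) := by ring
        rw [hu, hv, hw] at hz
        exact_mod_cast hz
      have hX : (X:QX)^(h*(k*k).toNat) * (X:QX)^(2*h*(((N:ℤ)+k+1).toNat))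
          = (X:QX)^(h*(2*N+1)) * (X:QX)^(h*(((k+1)*(k+1):ℤ)).toNat) := by
        rw [hu, hv, hw, Int.toNat_natCast, Int.toNat_natCast, Int.toNat_natCast,
          ← pow_add, ← pow_add]
        congr 1
        calc h*u + 2*h*w = h*(u+2*w) := by ring
          _ = h*(v + (2*N+1)) := by rw [hrel]
          _ = h*(2*N+1) + h*v := by ring
      have hsg : (C (R := ℚ) ε : QX) * C (R := ℚ) (ε^((k+1).natAbs)) = C (R := ℚ) (ε^(k.natAbs)) := by
        rw [← map_mul]
        congr 1
        rw [show ε * ε^((k+1).natAbs) = ε^((k+1).natAbs + 1) from by ring]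
        exact eps_pow_parity hε (by omega)
      calc (C (R := ℚ) (ε^k.natAbs) : QX) * ((X:QX)^(h*(k*k).toNat) *
          ((X:QX)^(2*h*(((N:ℤ)+k+1).toNat)) * GB (2*h) ((N:ℤ)+k+1) ((N:ℤ)-k-1)))
          = ((X:QX)^(h*(k*k).toNat) * (X:QX)^(2*h*(((N:ℤ)+k+1).toNat))) *
            (C (R := ℚ) (ε^k.natAbs) * GB (2*h) ((N:ℤ)+k+1) ((N:ℤ)-k-1)) := by ring
        _ = ((X:QX)^(h*(2*N+1)) * (X:QX)^(h*(((k+1)*(k+1):ℤ)).toNat)) *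
            ((C (R := ℚ) ε * C (R := ℚ) (ε^((k+1).natAbs))) * GB (2*h) ((N:ℤ)+k+1) ((N:ℤ)-k-1)) := by
            rw [hX, hsg]
        _ = _ := by ring
    linear_combination e1 + e2 + e3
  rw [step1, Finset.sum_add_distrib, Finset.sum_add_distrib]
  have hA : ∑ k ∈ Icc (-(N:ℤ)-1) ((N:ℤ)+1), (1 + (X:QX)^(2*h*(2*N+1))) * thTerm h ε N k
      = (1 + (X:QX)^(2*h*(2*N+1))) * thSum h ε N := by
    rw [← Finset.mul_sum, sum_thTerm_ext (by omega) (by omega)]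
  have hB : ∑ k ∈ Icc (-(N:ℤ)-1) ((N:ℤ)+1), (C (R := ℚ) ε * (X:QX)^(h*(2*N+1))) * thTerm h ε N (k-1)
      = (C (R := ℚ) ε * (X:QX)^(h*(2*N+1))) * thSum h ε N := by
    rw [← Finset.mul_sum]
    congr 1
    rw [show Icc (-(N:ℤ)-1) ((N:ℤ)+1) = (Icc (-(N:ℤ)-2) ((N:ℤ))).map (addRightEmbedding 1) from by
      rw [Finset.map_add_right_Icc]; congr 1 <;> ring]
    rw [Finset.sum_map]
    simp only [addRightEmbedding_apply, add_sub_cancel_right]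
    exact sum_thTerm_ext (by omega) (by omega)
  have hC : ∑ k ∈ Icc (-(N:ℤ)-1) ((N:ℤ)+1), (C (R := ℚ) ε * (X:QX)^(h*(2*N+1))) * thTerm h ε N (k+1)
      = (C (R := ℚ) ε * (X:QX)^(h*(2*N+1))) * thSum h ε N := by
    rw [← Finset.mul_sum]
    congr 1
    rw [show Icc (-(N:ℤ)-1) ((N:ℤ)+1) = (Icc (-(N:ℤ)) ((N:ℤ)+2)).map (addRightEmbedding (-1)) from by
      rw [Finset.map_add_right_Icc]; congr 1 <;> ring]
    rw [Finset.sum_map]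
    simp only [addRightEmbedding_apply]
    have : ∀ x ∈ Icc (-(N:ℤ)) ((N:ℤ)+2), thTerm h ε N (x + -1 + 1) = thTerm h ε N x := by
      intro x _; congr 1; ring
    rw [Finset.sum_congr rfl this]
    exact sum_thTerm_ext (by omega) (by omega)
  rw [hA, hB, hC]
  have hC2 : (C (R := ℚ) ε : QX)^2 = 1 := by rw [← map_pow, hε, map_one]
  have hXX : ((X:QX)^(h*(2*N+1)))^2 = (X:QX)^(2*h*(2*N+1)) := by
    rw [← pow_mul]; congr 1; ring
  calc (1 + (X:QX)^(2*h*(2*N+1))) * thSum h ε N + C (R := ℚ) ε * (X:QX)^(h*(2*N+1)) * thSum h ε N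
        + C (R := ℚ) ε * (X:QX)^(h*(2*N+1)) * thSum h ε N
      = (1 + (C (R := ℚ) ε)^2 * ((X:QX)^(h*(2*N+1)))^2 + 2 * (C (R := ℚ) ε * (X:QX)^(h*(2*N+1)))) * thSum h ε N := by
        rw [hC2, hXX]; ring
    _ = (1 + C (R := ℚ) ε * (X:QX)^(h*(2*N+1)))^2 * thSum h ε N := by ring

lemma thSum_eq_prod (h : ℕ) (hh : 1 ≤ h) (ε : ℚ) (hε : ε^2 = 1) (N : ℕ) :
    thSum h ε N = ∏ i ∈ range N, (1 + C (R := ℚ) ε * (X:QX)^(h*(2*i+1)))^2 := by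
  induction N with
  | zero => rw [thSum_zero h ε hh, Finset.range_zero, Finset.prod_empty]
  | succ N ih => rw [thSum_succ h hh ε hε N, ih, Finset.prod_range_succ]; ring

/-! ### psi sums -/

lemma tri_nonneg (k : ℤ) : 0 ≤ k*(k+1)/2 := by
  have h : 0 ≤ k*(k+1) := by nlinarith [sq_nonneg (2*k+1)]
  exact Int.ediv_nonneg h (by norm_num)

lemma tri_shift (k : ℤ) : k*(k+1)/2 = (k-1)*((k-1)+1)/2 + k := by
  obtain ⟨c, hc⟩ := Int.even_mul_succ_self (k-1)
  obtain ⟨a, ha⟩ : ∃ a:ℤ, (k-1)*((k-1)+1) = a := ⟨_, rfl⟩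
  obtain ⟨b, hb⟩ : ∃ b:ℤ, k*(k+1) = b := ⟨_, rfl⟩
  have h2 : k*(k+1) = (k-1)*((k-1)+1) + 2*k := by ring
  rw [ha] at hc h2
  rw [hb] at h2
  rw [ha, hb]
  omega

def psTerm (h : ℕ) (N : ℕ) (k : ℤ) : QX :=
  (X:QX)^(h*(k*(k+1)/2).toNat) * GB h ((N:ℤ)+k) ((N:ℤ)-k)

def psSum (h : ℕ) (N : ℕ) : QX := ∑ k ∈ Icc (-(N:ℤ)) (N:ℤ), psTerm h N k

lemma psTerm_zero_of_big {h : ℕ} {N : ℕ} {k : ℤ} (hk : k < -(N:ℤ) ∨ (N:ℤ) < k) :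
    psTerm h N k = 0 := by
  rcases hk with hk | hk
  · rw [psTerm, GB_neg_left (by omega), mul_zero]
  · rw [psTerm, GB_neg_right (by omega), mul_zero]

lemma sum_psTerm_ext {h : ℕ} {N : ℕ} {a b : ℤ} (ha : a ≤ -(N:ℤ)) (hb : (N:ℤ) ≤ b) :
    ∑ k ∈ Icc a b, psTerm h N k = psSum h N := by
  rw [psSum]
  symm
  apply Finset.sum_subset
  · intro x hx; rw [Finset.mem_Icc] at *; omega
  · intro x hx hnx
    rw [Finset.mem_Icc] at hx hnx
    push_neg at hnx
    apply psTerm_zero_of_big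
    omega

lemma psSum_zero (h : ℕ) (hh : 1 ≤ h) : psSum h 0 = 1 := by
  rw [psSum, show (((0:ℕ):ℤ)) = (0:ℤ) from rfl, show -(0:ℤ) = 0 from rfl,
    Finset.Icc_self, Finset.sum_singleton, psTerm]
  norm_num
  rw [show (0:ℤ) = (((0:ℕ)):ℤ) from rfl, GB_coe, GBn_zero_right _ _ hh]

lemma psSum_succ (h : ℕ) (hh : 1 ≤ h) (N : ℕ) :
    psSum h (N+1) = ((1 + (X:QX)^(h*N)) * (1 + (X:QX)^(h*(N+1)))) * psSum h N := by
  have step1 : psSum h (N+1) =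
      ∑ k ∈ Icc (-(N:ℤ)-1) ((N:ℤ)+1),
        ((1 + (X:QX)^(h*(2*N+1))) * psTerm h N k
          + (X:QX)^(h*(N+1)) * psTerm h N (k-1)
          + (X:QX)^(h*N) * psTerm h N (k+1)) := by
    rw [psSum, show (-(((N+1):ℕ):ℤ)) = -(N:ℤ)-1 from by push_cast; ring,
      show ((((N+1):ℕ)):ℤ) = (N:ℤ)+1 from by push_cast; ring]
    apply Finset.sum_congr rfl
    intro k hk
    rw [Finset.mem_Icc] at hk
    have hdag := dagger h N hh k (by omega) (by omega)
    rw [psTerm, show ((N+1:ℕ):ℤ) = (N:ℤ)+1 from by push_cast; ring, hdag]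
    have e1 : ((X:QX)^(h*(k*(k+1)/2).toNat) *
        ((1 + (X:QX)^(h*(2*N+1))) * GB h ((N:ℤ)+k) ((N:ℤ)-k)))
        = (1 + (X:QX)^(h*(2*N+1))) * psTerm h N k := by
      rw [psTerm]; ring
    have e2 : ((X:QX)^(h*(k*(k+1)/2).toNat) *
        ((X:QX)^(h*(((N:ℤ)-k+1).toNat)) * GB h ((N:ℤ)+k-1) ((N:ℤ)-k+1)))
        = (X:QX)^(h*(N+1)) * psTerm h N (k-1) := by
      rw [psTerm, show (N:ℤ)+(k-1) = (N:ℤ)+k-1 from by ring,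
        show (N:ℤ)-(k-1) = (N:ℤ)-k+1 from by ring]
      obtain ⟨u, hu⟩ : ∃ u:ℕ, (k*(k+1)/2:ℤ) = u := ⟨(k*(k+1)/2).toNat, by
        rw [Int.toNat_of_nonneg (tri_nonneg k)]⟩
      obtain ⟨v, hv⟩ : ∃ v:ℕ, ((k-1)*((k-1)+1)/2:ℤ) = v := ⟨((k-1)*((k-1)+1)/2).toNat, by
        rw [Int.toNat_of_nonneg (tri_nonneg _)]⟩
      obtain ⟨w, hw⟩ : ∃ w:ℕ, ((N:ℤ)-k+1) = w := ⟨((N:ℤ)-k+1).toNat, by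
        rw [Int.toNat_of_nonneg (by omega)]⟩
      have hts := tri_shift k
      rw [hu, hv] at hts
      have hexp : h*((k*(k+1)/2:ℤ)).toNat + h*(((N:ℤ)-k+1).toNat)
          = h*(N+1) + h*(((k-1)*((k-1)+1)/2:ℤ)).toNat := by
        rw [hu, hv, hw, Int.toNat_natCast, Int.toNat_natCast, Int.toNat_natCast]
        have huv : u + w = v + (N+1) := by omega
        calc h*u + h*w = h*(u+w) := by ring
          _ = h*(v+(N+1)) := by rw [huv]
          _ = h*(N+1) + h*v := by ring
      rw [← mul_assoc, ← pow_add, hexp, pow_add, mul_assoc]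
    have e3 : ((X:QX)^(h*(k*(k+1)/2).toNat) *
        ((X:QX)^(h*(((N:ℤ)+k+1).toNat)) * GB h ((N:ℤ)+k+1) ((N:ℤ)-k-1)))
        = (X:QX)^(h*N) * psTerm h N (k+1) := by
      rw [psTerm, show (N:ℤ)+(k+1) = (N:ℤ)+k+1 from by ring,
        show (N:ℤ)-(k+1) = (N:ℤ)-k-1 from by ring]
      obtain ⟨u, hu⟩ : ∃ u:ℕ, (k*(k+1)/2:ℤ) = u := ⟨(k*(k+1)/2).toNat, by
        rw [Int.toNat_of_nonneg (tri_nonneg k)]⟩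
      obtain ⟨v, hv⟩ : ∃ v:ℕ, ((k+1)*((k+1)+1)/2:ℤ) = v := ⟨((k+1)*((k+1)+1)/2).toNat, by
        rw [Int.toNat_of_nonneg (tri_nonneg _)]⟩
      obtain ⟨w, hw⟩ : ∃ w:ℕ, ((N:ℤ)+k+1) = w := ⟨((N:ℤ)+k+1).toNat, by
        rw [Int.toNat_of_nonneg (by omega)]⟩
      have hts := tri_shift (k+1)
      rw [show (k+1)-1 = k from by ring] at hts
      rw [hu, hv] at hts
      have hexp : h*((k*(k+1)/2:ℤ)).toNat + h*(((N:ℤ)+k+1).toNat)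
          = h*N + h*(((k+1)*((k+1)+1)/2:ℤ)).toNat := by
        rw [hu, hv, hw, Int.toNat_natCast, Int.toNat_natCast, Int.toNat_natCast]
        have huv : u + w = v + N := by omega
        calc h*u + h*w = h*(u+w) := by ring
          _ = h*(v+N) := by rw [huv]
          _ = h*N + h*v := by ring
      rw [← mul_assoc, ← pow_add, hexp, pow_add, mul_assoc]
    linear_combination e1 + e2 + e3
  rw [step1, Finset.sum_add_distrib, Finset.sum_add_distrib]
  have hA : ∑ k ∈ Icc (-(N:ℤ)-1) ((N:ℤ)+1), (1 + (X:QX)^(h*(2*N+1))) * psTerm h N k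
      = (1 + (X:QX)^(h*(2*N+1))) * psSum h N := by
    rw [← Finset.mul_sum, sum_psTerm_ext (by omega) (by omega)]
  have hB : ∑ k ∈ Icc (-(N:ℤ)-1) ((N:ℤ)+1), (X:QX)^(h*(N+1)) * psTerm h N (k-1)
      = (X:QX)^(h*(N+1)) * psSum h N := by
    rw [← Finset.mul_sum]
    congr 1
    rw [show Icc (-(N:ℤ)-1) ((N:ℤ)+1) = (Icc (-(N:ℤ)-2) ((N:ℤ))).map (addRightEmbedding 1) from by
      rw [Finset.map_add_right_Icc]; congr 1 <;> ring]
    rw [Finset.sum_map]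
    simp only [addRightEmbedding_apply, add_sub_cancel_right]
    exact sum_psTerm_ext (by omega) (by omega)
  have hC : ∑ k ∈ Icc (-(N:ℤ)-1) ((N:ℤ)+1), (X:QX)^(h*N) * psTerm h N (k+1)
      = (X:QX)^(h*N) * psSum h N := by
    rw [← Finset.mul_sum]
    congr 1
    rw [show Icc (-(N:ℤ)-1) ((N:ℤ)+1) = (Icc (-(N:ℤ)) ((N:ℤ)+2)).map (addRightEmbedding (-1)) from by
      rw [Finset.map_add_right_Icc]; congr 1 <;> ring]
    rw [Finset.sum_map]
    simp only [addRightEmbedding_apply]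
    have : ∀ x ∈ Icc (-(N:ℤ)) ((N:ℤ)+2), psTerm h N (x + -1 + 1) = psTerm h N x := by
      intro x _; congr 1; ring
    rw [Finset.sum_congr rfl this]
    exact sum_psTerm_ext (by omega) (by omega)
  rw [hA, hB, hC]
  have hXX : (X:QX)^(h*N) * (X:QX)^(h*(N+1)) = (X:QX)^(h*(2*N+1)) := by
    rw [← pow_add]; congr 1; ring
  calc (1 + (X:QX)^(h*(2*N+1))) * psSum h N + (X:QX)^(h*(N+1)) * psSum h N
        + (X:QX)^(h*N) * psSum h N
      = (1 + (X:QX)^(h*N) * (X:QX)^(h*(N+1)) + ((X:QX)^(h*N) + (X:QX)^(h*(N+1)))) * psSum h N := by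
        rw [hXX]; ring
    _ = ((1 + (X:QX)^(h*N)) * (1 + (X:QX)^(h*(N+1)))) * psSum h N := by ring

lemma psSum_eq_prod (h : ℕ) (hh : 1 ≤ h) (N : ℕ) :
    psSum h N = ∏ i ∈ range N, ((1 + (X:QX)^(h*i)) * (1 + (X:QX)^(h*(i+1)))) := by
  induction N with
  | zero => rw [psSum_zero h hh, Finset.range_zero, Finset.prod_empty]
  | succ N ih => rw [psSum_succ h hh N, ih, Finset.prod_range_succ]; ring

/-! ### limits -/

lemma cng_sum_shrink {n : ℕ} {f : ℤ → QX} {a b a' b' : ℤ} (hsub : Icc a' b' ⊆ Icc a b)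
    (hvan : ∀ k ∈ Icc a b, k ∉ Icc a' b' → Cng n (f k) 0) :
    Cng n (∑ k ∈ Icc a b, f k) (∑ k ∈ Icc a' b', f k) := by
  have h1 : Cng n (∑ k ∈ Icc a b, f k)
      (∑ k ∈ Icc a b, (if k ∈ Icc a' b' then f k else 0)) := by
    apply Cng.sum
    intro k hk
    split_ifs with hmem
    · exact Cng.refl _
    · exact hvan k hk hmem
  have h2 : (∑ k ∈ Icc a b, (if k ∈ Icc a' b' then f k else 0)) = ∑ k ∈ Icc a' b', f k := by
    rw [Finset.sum_ite_mem, Finset.inter_eq_right.mpr hsub]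
  rwa [h2] at h1

lemma sq_toNat (k : ℤ) : (k*k).toNat = k.natAbs * k.natAbs := by
  rw [← Int.natAbs_mul_self, Int.toNat_natCast]

lemma big_sq {n : ℕ} {k : ℤ} (hk : n + 2 ≤ k.natAbs) : n + 1 ≤ (k*k).toNat := by
  rw [sq_toNat]
  nlinarith

lemma cng_munit_zero {n e : ℕ} (he : n + 1 ≤ e) (c g : QX) : Cng n (c * ((X:QX)^e * g)) 0 := by
  rw [cng_def, sub_zero]
  have h1 : (X:QX)^(n+1) ∣ (X:QX)^e := pow_dvd_pow _ he
  exact Dvd.dvd.mul_left (h1.mul_right g) c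

lemma gb_limit {H a b n : ℕ} (hH : 1 ≤ H) (han : n+1 ≤ a) (hbn : n+1 ≤ b) :
    Cng n (GBn H a b) ((qPochInf ℚ H)⁻¹) := by
  have c1 : Cng n (pochT H (a+b)) (qPochInf ℚ H) := (qPochInf_cng hH (by omega)).symm
  have c2 : Cng n ((pochT H a)⁻¹) ((qPochInf ℚ H)⁻¹) :=
    Cng.inv (pochT_ne hH) (qPochInf_ne hH) (qPochInf_cng hH han).symm
  have c3 : Cng n ((pochT H b)⁻¹) ((qPochInf ℚ H)⁻¹) :=
    Cng.inv (pochT_ne hH) (qPochInf_ne hH) (qPochInf_cng hH hbn).symm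
  have := c1.mul (c2.mul c3)
  rw [← GBn] at this
  refine this.trans ?_
  rw [← mul_assoc, PowerSeries.mul_inv_cancel _ (qPochInf_ne hH), one_mul]
  exact Cng.refl _

def Th (h : ℕ) (ε : ℚ) : QX := PowerSeries.mk fun n =>
  coeff (R := ℚ) n (∑ k ∈ Icc (-(n:ℤ)-1) ((n:ℤ)+1), C (R := ℚ) (ε^k.natAbs) * (X:QX)^(h*(k*k).toNat))

def Ps (h : ℕ) : QX := PowerSeries.mk fun n =>
  coeff (R := ℚ) n (∑ k ∈ Icc (-(n:ℤ)-1) ((n:ℤ)+1), (X:QX)^(h*(k*(k+1)/2).toNat))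

lemma th_pure_vanish {h n : ℕ} (hh : 1 ≤ h) {ε : ℚ} {k : ℤ} (hk : n+2 ≤ k.natAbs) :
    Cng n (C (R := ℚ) (ε^k.natAbs) * (X:QX)^(h*(k*k).toNat)) 0 := by
  have h1 : n+1 ≤ h*(k*k).toNat := by
    calc n+1 = 1*(n+1) := by ring
    _ ≤ h*((k*k).toNat) := Nat.mul_le_mul hh (big_sq hk)
  have := cng_munit_zero h1 (C (R := ℚ) (ε^k.natAbs)) 1
  rwa [mul_one] at this

lemma ps_pure_vanish {h n : ℕ} (hh : 1 ≤ h) {k : ℤ} (hk : n+2 ≤ k.natAbs) :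
    Cng n ((X:QX)^(h*(k*(k+1)/2).toNat)) 0 := by
  have key : n+1 ≤ (k*(k+1)/2).toNat := by
    rcases le_or_gt 0 k with hk0 | hk0
    · obtain ⟨u, hu⟩ : ∃ u:ℕ, k = (u:ℤ) := ⟨k.toNat, by omega⟩
      have hun : n+2 ≤ u := by
        subst hu; simpa using hk
      have : ((n:ℤ)+1) ≤ k*(k+1)/2 := by
        subst hu
        have h2 : ((n:ℤ)+1)*2 ≤ (u:ℤ)*((u:ℤ)+1) := by
          push_cast; nlinarith
        omega
      omega
    · obtain ⟨u, hu⟩ : ∃ u:ℕ, k = -(u:ℤ) := ⟨k.natAbs, by omega⟩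
      have hun : n+2 ≤ u := by
        subst hu; simpa using hk
      have : ((n:ℤ)+1) ≤ k*(k+1)/2 := by
        subst hu
        have h2 : ((n:ℤ)+1)*2 ≤ (-(u:ℤ))*(-(u:ℤ)+1) := by nlinarith [Int.natCast_pos.mpr (show 0 < u from by omega)]
        omega
      omega
  have h1 : n+1 ≤ h*(k*(k+1)/2).toNat := by
    calc n+1 = 1*(n+1) := by ring
    _ ≤ h*((k*(k+1)/2).toNat) := Nat.mul_le_mul hh key
  have := cng_munit_zero h1 1 1
  rwa [one_mul, mul_one] at this

lemma Th_cng {h n : ℕ} (hh : 1 ≤ h) {ε : ℚ} {a b : ℤ} (ha : a ≤ -(n:ℤ)-1) (hb : (n:ℤ)+1 ≤ b) :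
    Cng n (Th h ε) (∑ k ∈ Icc a b, C (R := ℚ) (ε^k.natAbs) * (X:QX)^(h*(k*k).toNat)) := by
  rw [cng_iff]
  intro i hi
  rw [Th, coeff_mk]
  have hcng : Cng i (∑ k ∈ Icc a b, C (R := ℚ) (ε^k.natAbs) * (X:QX)^(h*(k*k).toNat))
      (∑ k ∈ Icc (-(i:ℤ)-1) ((i:ℤ)+1), C (R := ℚ) (ε^k.natAbs) * (X:QX)^(h*(k*k).toNat)) := by
    apply cng_sum_shrink
    · intro x hx
      rw [Finset.mem_Icc] at *
      omega
    · intro k hk hnk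
      rw [Finset.mem_Icc] at hk hnk
      push_neg at hnk
      exact th_pure_vanish hh (by omega)
  exact ((cng_iff.mp hcng) i le_rfl).symm

lemma Ps_cng {h n : ℕ} (hh : 1 ≤ h) {a b : ℤ} (ha : a ≤ -(n:ℤ)-1) (hb : (n:ℤ)+1 ≤ b) :
    Cng n (Ps h) (∑ k ∈ Icc a b, (X:QX)^(h*(k*(k+1)/2).toNat)) := by
  rw [cng_iff]
  intro i hi
  rw [Ps, coeff_mk]
  have hcng : Cng i (∑ k ∈ Icc a b, (X:QX)^(h*(k*(k+1)/2).toNat))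
      (∑ k ∈ Icc (-(i:ℤ)-1) ((i:ℤ)+1), (X:QX)^(h*(k*(k+1)/2).toNat)) := by
    apply cng_sum_shrink
    · intro x hx
      rw [Finset.mem_Icc] at *
      omega
    · intro k hk hnk
      rw [Finset.mem_Icc] at hk hnk
      push_neg at hnk
      exact ps_pure_vanish hh (by omega)
  exact ((cng_iff.mp hcng) i le_rfl).symm

lemma thSum_limit (h : ℕ) (hh : 1 ≤ h) (ε : ℚ) (n : ℕ) :
    Cng n (thSum h ε (2*n+2)) (Th h ε * (qPochInf ℚ (2*h))⁻¹) := by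
  set N := 2*n+2 with hN
  have step1 : Cng n (thSum h ε N)
      (∑ k ∈ Icc (-(N:ℤ)) (N:ℤ), (C (R := ℚ) (ε^k.natAbs) * (X:QX)^(h*(k*k).toNat)) * (qPochInf ℚ (2*h))⁻¹) := by
    rw [thSum]
    apply Cng.sum
    intro k hk
    rw [Finset.mem_Icc] at hk
    rcases le_or_gt k.natAbs (n+1) with hsm | hbig
    · rw [thTerm, GB_eq_GBn (by omega) (by omega)]
      have hgb : Cng n (GBn (2*h) (((N:ℤ)+k).toNat) (((N:ℤ)-k).toNat)) ((qPochInf ℚ (2*h))⁻¹) :=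
        gb_limit (by omega) (by omega) (by omega)
      have := (Cng.refl (C (R := ℚ) (ε^k.natAbs))).mul ((Cng.refl ((X:QX)^(h*(k*k).toNat))).mul hgb)
      refine this.trans ?_
      rw [show C (R := ℚ) (ε^k.natAbs) * ((X:QX)^(h*(k*k).toNat) * (qPochInf ℚ (2*h))⁻¹)
        = (C (R := ℚ) (ε^k.natAbs) * (X:QX)^(h*(k*k).toNat)) * (qPochInf ℚ (2*h))⁻¹ from by ring]
      exact Cng.refl _
    · have h1 : n+1 ≤ h*(k*k).toNat := by
        calc n+1 = 1*(n+1) := by ring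
        _ ≤ h*((k*k).toNat) := Nat.mul_le_mul hh (big_sq (by omega))
      have hz1 : Cng n (thTerm h ε N k) 0 := by
        rw [thTerm]
        exact cng_munit_zero h1 _ _
      have hz2 : Cng n ((C (R := ℚ) (ε^k.natAbs) * (X:QX)^(h*(k*k).toNat)) * (qPochInf ℚ (2*h))⁻¹) 0 := by
        have := cng_munit_zero h1 (C (R := ℚ) (ε^k.natAbs)) ((qPochInf ℚ (2*h))⁻¹)
        refine Cng.trans ?_ this
        rw [show (C (R := ℚ) (ε^k.natAbs) * (X:QX)^(h*(k*k).toNat)) * (qPochInf ℚ (2*h))⁻¹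
          = C (R := ℚ) (ε^k.natAbs) * ((X:QX)^(h*(k*k).toNat) * (qPochInf ℚ (2*h))⁻¹) from by ring]
        exact Cng.refl _
      exact hz1.trans hz2.symm
  rw [← Finset.sum_mul] at step1
  refine step1.trans ?_
  apply Cng.mul _ (Cng.refl _)
  exact (Th_cng hh (by omega) (by omega)).symm

lemma psSum_limit (h : ℕ) (hh : 1 ≤ h) (n : ℕ) :
    Cng n (psSum h (2*n+2)) (Ps h * (qPochInf ℚ h)⁻¹) := by
  set N := 2*n+2 with hN
  have step1 : Cng n (psSum h N)
      (∑ k ∈ Icc (-(N:ℤ)) (N:ℤ), ((X:QX)^(h*(k*(k+1)/2).toNat)) * (qPochInf ℚ h)⁻¹) := by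
    rw [psSum]
    apply Cng.sum
    intro k hk
    rw [Finset.mem_Icc] at hk
    rcases le_or_gt k.natAbs (n+1) with hsm | hbig
    · rw [psTerm, GB_eq_GBn (by omega) (by omega)]
      exact (Cng.refl ((X:QX)^(h*(k*(k+1)/2).toNat))).mul (gb_limit hh (by omega) (by omega))
    · have hz1 : Cng n (psTerm h N k) 0 := by
        rw [psTerm]
        have := (ps_pure_vanish (n := n) hh (show n+2 ≤ k.natAbs from by omega)).mul
          (Cng.refl (GB h ((N:ℤ)+k) ((N:ℤ)-k)))
        rwa [zero_mul] at this
      have hz2 : Cng n (((X:QX)^(h*(k*(k+1)/2).toNat)) * (qPochInf ℚ h)⁻¹) 0 := by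
        have := (ps_pure_vanish (n := n) hh (show n+2 ≤ k.natAbs from by omega)).mul
          (Cng.refl ((qPochInf ℚ h)⁻¹))
        rwa [zero_mul] at this
      exact hz1.trans hz2.symm
  rw [← Finset.sum_mul] at step1
  refine step1.trans ?_
  apply Cng.mul _ (Cng.refl _)
  exact (Ps_cng hh (by omega) (by omega)).symm

/-! ### the three product identities -/

lemma constantCoeff_hodd (h N : ℕ) (hh : 1 ≤ h) : constantCoeff (R := ℚ) (hodd h N) = 1 := by
  rw [hodd, map_prod, Finset.prod_eq_one]
  intro k _
  exact constantCoeff_factor (by nlinarith)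

lemma cng_hodd_F2 {n N : ℕ} (hN : n+1 ≤ N) :
    Cng n (hodd 1 N * qPochInf ℚ 2) (qPochInf ℚ 1) := by
  have c2 : Cng n (qPochInf ℚ 2) (pochT 2 N) := qPochInf_cng (by omega) hN
  have := (Cng.refl (hodd 1 N)).mul c2
  refine this.trans ?_
  have key : hodd 1 N * pochT 2 N = pochT 1 (2*N) := by
    have := pochT_split_parity 1 N (le_refl 1)
    rw [show 2*1 = 2 from rfl] at this
    exact this.symm
  rw [key]
  exact (qPochInf_cng (le_refl 1) (by omega)).symm

lemma cng_hplus_clear {n N : ℕ} (hN : n+1 ≤ N) :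
    Cng n (hplus 1 N * (qPochInf ℚ 1 * qPochInf ℚ 4)) ((qPochInf ℚ 2)^2) := by
  have c1 : Cng n (qPochInf ℚ 1) (pochT 1 (2*N)) := qPochInf_cng (le_refl 1) (by omega)
  have c4 : Cng n (qPochInf ℚ 4) (pochT 4 N) := qPochInf_cng (by omega) (by omega)
  have := (Cng.refl (hplus 1 N)).mul (c1.mul c4)
  refine this.trans ?_
  have key : hplus 1 N * (pochT 1 (2*N) * pochT 4 N) = pochT 2 (2*N) * pochT 2 N := by
    have s1 : pochT 1 (2*N) = hodd 1 N * pochT 2 N := by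
      have := pochT_split_parity 1 N (le_refl 1)
      rwa [show 2*1 = 2 from rfl] at this
    have s2 : hodd 2 N * pochT 4 N = pochT 2 (2*N) := by
      have := pochT_split_parity 2 N (by omega)
      rw [show 2*2 = 4 from rfl] at this
      exact this.symm
    calc hplus 1 N * (pochT 1 (2*N) * pochT 4 N)
        = (hodd 1 N * hplus 1 N) * pochT 4 N * pochT 2 N := by rw [s1]; ring
      _ = hodd 2 N * pochT 4 N * pochT 2 N := by rw [hodd_mul_hplus, show 2*1 = 2 from rfl]
      _ = pochT 2 (2*N) * pochT 2 N := by rw [s2]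
  rw [key]
  have a1 : Cng n (pochT 2 (2*N)) (qPochInf ℚ 2) := (qPochInf_cng (by omega) (by omega)).symm
  have a2 : Cng n (pochT 2 N) (qPochInf ℚ 2) := (qPochInf_cng (by omega) (by omega)).symm
  refine (a1.mul a2).trans ?_
  rw [pow_two]
  exact Cng.refl _

lemma cng_pa_clear {n h M : ℕ} (hh : 1 ≤ h) (hM : n+1 ≤ M) :
    Cng n (pa h M * qPochInf ℚ h) (qPochInf ℚ (2*h)) := by
  have c1 : Cng n (qPochInf ℚ h) (pochT h M) := qPochInf_cng hh hM
  have := (Cng.refl (pa h M)).mul c1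
  refine this.trans ?_
  rw [show pa h M * pochT h M = pochT (2*h) M from by rw [← pochT_mul_pa]; ring]
  exact (qPochInf_cng (by omega) hM).symm

lemma JTP_minus : Th 1 (-1) * qPochInf ℚ 2 = (qPochInf ℚ 1)^2 := by
  apply eq_of_cng
  intro n
  set N := 2*n+2 with hNdef
  have c0 : Cng n (thSum 1 (-1) N) (Th 1 (-1) * (qPochInf ℚ 2)⁻¹) := by
    have := thSum_limit 1 (le_refl 1) (-1) n
    rwa [show 2*1 = 2 from rfl] at this
  have hprod : thSum 1 (-1) N = (hodd 1 N)^2 := by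
    rw [thSum_eq_prod 1 (le_refl 1) (-1) (by norm_num) N, hodd, ← Finset.prod_pow]
    apply Finset.prod_congr rfl
    intro i _
    rw [map_neg, map_one]
    ring
  rw [hprod] at c0
  have c1 := (c0.symm.mul (Cng.refl (qPochInf ℚ 2))).mul (Cng.refl (qPochInf ℚ 2))
  have e1 : Th 1 (-1) * (qPochInf ℚ 2)⁻¹ * qPochInf ℚ 2 * qPochInf ℚ 2
      = Th 1 (-1) * qPochInf ℚ 2 := by
    rw [mul_assoc (Th 1 (-1)), PowerSeries.inv_mul_cancel _ (qPochInf_ne (by omega)), mul_one]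
  rw [e1] at c1
  refine c1.trans ?_
  have e2 : (hodd 1 N)^2 * qPochInf ℚ 2 * qPochInf ℚ 2 = (hodd 1 N * qPochInf ℚ 2)^2 := by ring
  rw [e2]
  exact (cng_hodd_F2 (by omega)).pow 2

lemma JTP_plus : Th 1 1 * ((qPochInf ℚ 1)^2 * (qPochInf ℚ 4)^2) = (qPochInf ℚ 2)^5 := by
  apply eq_of_cng
  intro n
  set N := 2*n+2 with hNdef
  have c0 : Cng n (thSum 1 1 N) (Th 1 1 * (qPochInf ℚ 2)⁻¹) := by
    have := thSum_limit 1 (le_refl 1) 1 n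
    rwa [show 2*1 = 2 from rfl] at this
  have hprod : thSum 1 1 N = (hplus 1 N)^2 := by
    rw [thSum_eq_prod 1 (le_refl 1) 1 (by norm_num) N, hplus, ← Finset.prod_pow]
    apply Finset.prod_congr rfl
    intro i _
    rw [map_one, one_mul]
  rw [hprod] at c0
  have c1 := (c0.symm.mul (Cng.refl (qPochInf ℚ 2))).mul
    (Cng.refl ((qPochInf ℚ 1 * qPochInf ℚ 4)^2))
  have e1 : Th 1 1 * (qPochInf ℚ 2)⁻¹ * qPochInf ℚ 2 * (qPochInf ℚ 1 * qPochInf ℚ 4)^2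
      = Th 1 1 * ((qPochInf ℚ 1)^2 * (qPochInf ℚ 4)^2) := by
    rw [mul_assoc (Th 1 1), PowerSeries.inv_mul_cancel _ (qPochInf_ne (by omega)), mul_one]
    ring
  rw [e1] at c1
  refine c1.trans ?_
  have e2 : (hplus 1 N)^2 * qPochInf ℚ 2 * (qPochInf ℚ 1 * qPochInf ℚ 4)^2
      = (hplus 1 N * (qPochInf ℚ 1 * qPochInf ℚ 4))^2 * qPochInf ℚ 2 := by ring
  rw [e2]
  have := ((cng_hplus_clear (n := n) (N := N) (by omega)).pow 2).mul (Cng.refl (qPochInf ℚ 2))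
  refine this.trans ?_
  rw [show ((qPochInf ℚ 2)^2)^2 * qPochInf ℚ 2 = (qPochInf ℚ 2)^5 from by ring]
  exact Cng.refl _

lemma JTP_psi : Ps 8 * qPochInf ℚ 8 = 2 * (qPochInf ℚ 16)^2 := by
  apply eq_of_cng
  intro n
  set N := 2*n+2 with hNdef
  have c0 : Cng n (psSum 8 N) (Ps 8 * (qPochInf ℚ 8)⁻¹) := psSum_limit 8 (by omega) n
  have hprod : psSum 8 N = 2 * (pa 8 (2*n+1) * pa 8 N) := by
    rw [psSum_eq_prod 8 (by omega) N, Finset.prod_mul_distrib]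
    have h1 : (∏ i ∈ range N, (1 + (X:QX)^(8*i))) = 2 * pa 8 (2*n+1) := by
      rw [show N = (2*n+1)+1 from by omega, Finset.prod_range_succ']
      rw [show 8*0 = 0 from rfl, pow_zero, pa]
      norm_num
      rw [mul_comm]
    have h2 : (∏ i ∈ range N, (1 + (X:QX)^(8*(i+1)))) = pa 8 N := by rw [pa]
    rw [h1, h2]
    ring
  rw [hprod] at c0
  have c1 := (c0.symm.mul (Cng.refl (qPochInf ℚ 8))).mul (Cng.refl (qPochInf ℚ 8))
  have e1 : Ps 8 * (qPochInf ℚ 8)⁻¹ * qPochInf ℚ 8 * qPochInf ℚ 8 = Ps 8 * qPochInf ℚ 8 := by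
    rw [mul_assoc (Ps 8), PowerSeries.inv_mul_cancel _ (qPochInf_ne (by omega)), mul_one]
  rw [e1] at c1
  refine c1.trans ?_
  have e2 : 2 * (pa 8 (2*n+1) * pa 8 N) * qPochInf ℚ 8 * qPochInf ℚ 8
      = 2 * ((pa 8 (2*n+1) * qPochInf ℚ 8) * (pa 8 N * qPochInf ℚ 8)) := by ring
  rw [e2]
  have a1 : Cng n (pa 8 (2*n+1) * qPochInf ℚ 8) (qPochInf ℚ 16) := by
    have := cng_pa_clear (n := n) (h := 8) (M := 2*n+1) (by omega) (by omega)
    rwa [show 2*8 = 16 from rfl] at this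
  have a2 : Cng n (pa 8 N * qPochInf ℚ 8) (qPochInf ℚ 16) := by
    have := cng_pa_clear (n := n) (h := 8) (M := N) (by omega) (by omega)
    rwa [show 2*8 = 16 from rfl] at this
  have := (Cng.refl (2:QX)).mul (a1.mul a2)
  refine this.trans ?_
  rw [show (2:QX) * (qPochInf ℚ 16 * qPochInf ℚ 16) = 2 * (qPochInf ℚ 16)^2 from by ring]
  exact Cng.refl _

/-! ### dissection and crux -/

lemma odd_sq_exp (t : ℤ) : ((2*t+1)*(2*t+1)).toNat = 8*((t*(t+1)/2)).toNat + 1 := by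
  obtain ⟨c, hc⟩ := Int.even_mul_succ_self t
  obtain ⟨a, ha⟩ : ∃ a:ℤ, t*(t+1) = a := ⟨_, rfl⟩
  have h1 : (2*t+1)*(2*t+1) = 4*(t*(t+1)) + 1 := by ring
  rw [ha] at hc h1
  have ha0 : 0 ≤ a := by rw [← ha]; nlinarith [sq_nonneg (2*t+1)]
  rw [h1, ha]
  omega

lemma dissect : Th 1 1 - Th 1 (-1) = 2 * X * Ps 8 := by
  apply eq_of_cng
  intro n
  have cL1 : Cng n (Th 1 1)
      (∑ k ∈ Icc (-2*(n:ℤ)-6) (2*(n:ℤ)+5), C (R := ℚ) ((1:ℚ)^k.natAbs) * (X:QX)^(1*(k*k).toNat)) :=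
    Th_cng (le_refl 1) (by omega) (by omega)
  have cL2 : Cng n (Th 1 (-1))
      (∑ k ∈ Icc (-2*(n:ℤ)-6) (2*(n:ℤ)+5), C (R := ℚ) ((-1:ℚ)^k.natAbs) * (X:QX)^(1*(k*k).toNat)) :=
    Th_cng (le_refl 1) (by omega) (by omega)
  have cR : Cng n (Ps 8)
      (∑ t ∈ Icc (-(n:ℤ)-3) ((n:ℤ)+2), (X:QX)^(8*(t*(t+1)/2).toNat)) :=
    Ps_cng (by omega) (by omega) (by omega)
  have key : (∑ k ∈ Icc (-2*(n:ℤ)-6) (2*(n:ℤ)+5),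
        (C (R := ℚ) ((1:ℚ)^k.natAbs) - C (R := ℚ) ((-1:ℚ)^k.natAbs)) * (X:QX)^(1*(k*k).toNat))
      = 2 * X * (∑ t ∈ Icc (-(n:ℤ)-3) ((n:ℤ)+2), (X:QX)^(8*(t*(t+1)/2).toNat)) := by
    rw [Finset.mul_sum]
    rw [← Finset.sum_filter_of_ne (p := fun k => Odd k)
      (by
        intro k hk hne
        by_contra hodd
        have hev : Even k := Int.not_odd_iff_even.mp hodd
        have : ((-1:ℚ))^k.natAbs = 1 := Even.neg_one_pow (Int.natAbs_even.mpr hev)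
        rw [this, one_pow, sub_self, zero_mul] at hne
        exact hne rfl)]
    apply Finset.sum_bij' (i := fun (k : ℤ) _ => (k-1)/2) (j := fun (t : ℤ) _ => 2*t+1)
    · intro k hk
      rw [Finset.mem_filter, Finset.mem_Icc] at hk
      obtain ⟨⟨h1, h2⟩, c, hc⟩ := hk
      rw [Finset.mem_Icc]
      omega
    · intro t ht
      rw [Finset.mem_Icc] at ht
      rw [Finset.mem_filter, Finset.mem_Icc]
      exact ⟨⟨by omega, by omega⟩, ⟨t, by ring⟩⟩
    · intro k hk
      rw [Finset.mem_filter] at hk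
      obtain ⟨_, c, hc⟩ := hk
      omega
    · intro t ht
      omega
    · intro k hk
      rw [Finset.mem_filter] at hk
      obtain ⟨_, hodd⟩ := hk
      obtain ⟨c, hc⟩ := hodd
      have hk2 : k = 2*((k-1)/2)+1 := by omega
      have hcoef : (C (R := ℚ) ((1:ℚ)^k.natAbs) - C (R := ℚ) ((-1:ℚ)^k.natAbs)) = (2:QX) := by
        have hone : ((1:ℚ))^k.natAbs = 1 := one_pow _
        have hminus : ((-1:ℚ))^k.natAbs = -1 :=
          Odd.neg_one_pow (Int.natAbs_odd.mpr ⟨c, hc⟩)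
        rw [hone, hminus, map_one, map_neg, map_one, sub_neg_eq_add]
        norm_num
      rw [hcoef]
      have hexp : 1*(k*k).toNat = 8*((((k-1)/2)*(((k-1)/2)+1)/2)).toNat + 1 := by
        rw [one_mul]
        conv_lhs => rw [hk2]
        exact odd_sq_exp ((k-1)/2)
      rw [hexp, pow_succ]
      ring
  have hL := cL1.sub cL2
  rw [← Finset.sum_sub_distrib] at hL
  have hL2 : Cng n (Th 1 1 - Th 1 (-1))
      (∑ k ∈ Icc (-2*(n:ℤ)-6) (2*(n:ℤ)+5),
        (C (R := ℚ) ((1:ℚ)^k.natAbs) - C (R := ℚ) ((-1:ℚ)^k.natAbs)) * (X:QX)^(1*(k*k).toNat)) := by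
    refine hL.trans ?_
    rw [show ∀ s : Finset ℤ, (∑ k ∈ s, (C (R := ℚ) ((1:ℚ)^k.natAbs) * (X:QX)^(1*(k*k).toNat)
      - C (R := ℚ) ((-1:ℚ)^k.natAbs) * (X:QX)^(1*(k*k).toNat)))
      = ∑ k ∈ s, (C (R := ℚ) ((1:ℚ)^k.natAbs) - C (R := ℚ) ((-1:ℚ)^k.natAbs)) * (X:QX)^(1*(k*k).toNat) from
      fun s => Finset.sum_congr rfl (fun k _ => by ring)]
    exact Cng.refl _
  rw [key] at hL2
  refine hL2.trans ?_
  exact ((Cng.refl (2*X : QX)).mul cR).symm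

lemma crux : (qPochInf ℚ 2)^6 * qPochInf ℚ 8
    = (qPochInf ℚ 1)^4 * (qPochInf ℚ 4)^2 * qPochInf ℚ 8
      + 4 * X * ((qPochInf ℚ 1)^2 * qPochInf ℚ 2 * (qPochInf ℚ 4)^2 * (qPochInf ℚ 16)^2) := by
  linear_combination (-(qPochInf ℚ 2 * qPochInf ℚ 8)) * JTP_plus
    + ((qPochInf ℚ 1)^2*(qPochInf ℚ 4)^2*qPochInf ℚ 8) * JTP_minus
    + (qPochInf ℚ 2*qPochInf ℚ 8*(qPochInf ℚ 1)^2*(qPochInf ℚ 4)^2) * dissect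
    + (2*X*qPochInf ℚ 2*(qPochInf ℚ 1)^2*(qPochInf ℚ 4)^2) * JTP_psi


/-! ### final assembly -/

lemma map_qPochInf (h : ℕ) :
    PowerSeries.map (Int.castRingHom ℚ) (qPochInf ℤ h) = qPochInf ℚ h := by
  ext n
  rw [PowerSeries.coeff_map, qPochInf, qPochInf, coeff_mk, coeff_mk]
  have key : PowerSeries.map (Int.castRingHom ℚ)
      (∏ k ∈ range (n+1), (1 - (X : PowerSeries ℤ)^(h*(k+1))))
      = ∏ k ∈ range (n+1), (1 - (X:QX)^(h*(k+1))) := by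
    rw [map_prod]
    apply Finset.prod_congr rfl
    intro k _
    rw [map_sub, map_one, map_pow, PowerSeries.map_X]
  rw [← key, PowerSeries.coeff_map]

lemma qPochInf_ne_zero {h : ℕ} (hh : 1 ≤ h) : qPochInf ℚ h ≠ 0 := by
  intro hz
  have := qPochInf_ne (h := h) hh
  rw [hz, map_zero] at this
  exact this rfl

lemma qx_two_ne_zero : (2 : QX) ≠ 0 := by
  intro hz
  have h2 := congrArg (constantCoeff (R := ℚ)) hz
  rw [map_ofNat, map_zero] at h2
  norm_num at h2

theorem overcubic_odd_gen_fun' (abar : ℕ → ℕ → ℕ) (habar : IsGenOvercubic abar)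
    (m : ℕ) :
    (PowerSeries.mk fun n => (abar (2 * m + 1) (2 * n + 1) : ℚ)) =
      2 * (qPochInf ℚ 2 ^ (2 * m + 2) * qPochInf ℚ 8 ^ 2 *
        (qPochInf ℚ 1 ^ (4 * m + 4) * qPochInf ℚ 4)⁻¹) := by
  have hQ' := habar (2*m+1) (by omega)
  have hQ0 := congrArg (PowerSeries.map (Int.castRingHom ℚ)) hQ'
  rw [map_mul, map_mul, map_pow, map_pow, map_mul, map_pow, map_pow,
    map_qPochInf, map_qPochInf, map_qPochInf] at hQ0
  have hmk : PowerSeries.map (Int.castRingHom ℚ) (PowerSeries.mk fun n => (abar (2*m+1) n : ℤ))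
      = (PowerSeries.mk fun n => (abar (2*m+1) n : ℚ)) := by
    ext n
    rw [PowerSeries.coeff_map, coeff_mk, coeff_mk]
    simp
  rw [hmk, show 2*(2*m+1) = 4*m+2 from by ring, show (2*m+1) - 1 = 2*m from by omega] at hQ0
  set Aq : QX := (PowerSeries.mk fun n => (abar (2*m+1) n : ℚ)) with hAqdef
  set Ob : QX := (PowerSeries.mk fun n => (abar (2*m+1) (2*n+1) : ℚ)) with hObdef
  have hQ : Aq * (qPochInf ℚ 1)^2 * (qPochInf ℚ 2)^(4*m+2)
      = (qPochInf ℚ 4)^(2*m) * (qPochInf ℚ 2)^3 := hQ0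
  -- rescaled equation
  have hsg2 : sg (qPochInf ℚ 2) = qPochInf ℚ 2 := by
    have := sg_qPochInf_even 1 (le_refl 1)
    rwa [show 2*1 = 2 from rfl] at this
  have hsg4 : sg (qPochInf ℚ 4) = qPochInf ℚ 4 := by
    have := sg_qPochInf_even 2 (by omega)
    rwa [show 2*2 = 4 from rfl] at this
  have hS := congrArg sg hQ
  rw [map_mul, map_mul, map_pow, map_pow, map_mul, map_pow, map_pow, hsg2, hsg4] at hS
  -- dissection
  have hD : Aq - sg Aq = 2 * X * Td Ob := by
    ext n
    rw [map_sub, coeff_sg]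
    rw [show (2 * X * Td Ob : QX) = C (R := ℚ) 2 * (X * Td Ob) from by
      rw [map_ofNat (C (R := ℚ)) 2]; ring]
    rw [PowerSeries.coeff_C_mul]
    cases n with
    | zero =>
      rw [hAqdef, coeff_mk]
      have hx : coeff (R := ℚ) 0 ((X : QX) * Td Ob) = 0 := by
        rw [coeff_zero_eq_constantCoeff, map_mul, constantCoeff_X, zero_mul]
      rw [hx, mul_zero, pow_zero, one_mul, sub_self]
    | succ s =>
      rw [PowerSeries.coeff_succ_X_mul, coeff_Td, hAqdef, coeff_mk, coeff_mk]
      rcases Nat.even_or_odd s with ⟨u, hu⟩ | ⟨u, hu⟩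
      · rw [if_pos ⟨u, by omega⟩]
        rw [show 2*(s/2)+1 = s+1 from by omega]
        rw [show ((-1:ℚ))^(s+1) = -1 from Odd.neg_one_pow ⟨u, by omega⟩]
        ring
      · rw [if_neg (by omega)]
        rw [show ((-1:ℚ))^(s+1) = 1 from Even.neg_one_pow ⟨u+1, by omega⟩]
        ring
  -- squared E1
  have hE2 : (sg (qPochInf ℚ 1))^2 * (qPochInf ℚ 1)^2 * (qPochInf ℚ 4)^2
      = (qPochInf ℚ 2)^6 := by
    calc (sg (qPochInf ℚ 1))^2 * (qPochInf ℚ 1)^2 * (qPochInf ℚ 4)^2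
        = (sg (qPochInf ℚ 1) * qPochInf ℚ 1 * qPochInf ℚ 4)^2 := by ring
      _ = ((qPochInf ℚ 2)^3)^2 := by rw [E1]
      _ = (qPochInf ℚ 2)^6 := by ring
  have hII : (Aq - sg Aq) * ((qPochInf ℚ 1)^2 * (sg (qPochInf ℚ 1))^2 *
        ((qPochInf ℚ 1)^2 * (qPochInf ℚ 4)^2) * (qPochInf ℚ 2)^(4*m+2))
      = (qPochInf ℚ 4)^(2*m) * (qPochInf ℚ 2)^3 *
        ((qPochInf ℚ 2)^6 - (qPochInf ℚ 1)^4 * (qPochInf ℚ 4)^2) := by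
    linear_combination ((sg (qPochInf ℚ 1))^2 * (qPochInf ℚ 1)^2 * (qPochInf ℚ 4)^2) * hQ
      - ((qPochInf ℚ 1)^2 * (qPochInf ℚ 1)^2 * (qPochInf ℚ 4)^2) * hS
      + ((qPochInf ℚ 4)^(2*m) * (qPochInf ℚ 2)^3) * hE2
  have hbr : (qPochInf ℚ 1)^2 * (sg (qPochInf ℚ 1))^2 *
        ((qPochInf ℚ 1)^2 * (qPochInf ℚ 4)^2) * (qPochInf ℚ 2)^(4*m+2)
      = (qPochInf ℚ 1)^2 * (qPochInf ℚ 2)^(4*m+8) := by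
    calc (qPochInf ℚ 1)^2 * (sg (qPochInf ℚ 1))^2 *
        ((qPochInf ℚ 1)^2 * (qPochInf ℚ 4)^2) * (qPochInf ℚ 2)^(4*m+2)
        = (qPochInf ℚ 1)^2 * (((sg (qPochInf ℚ 1))^2 * (qPochInf ℚ 1)^2 * (qPochInf ℚ 4)^2)
            * (qPochInf ℚ 2)^(4*m+2)) := by ring
      _ = (qPochInf ℚ 1)^2 * ((qPochInf ℚ 2)^6 * (qPochInf ℚ 2)^(4*m+2)) := by rw [hE2]
      _ = (qPochInf ℚ 1)^2 * (qPochInf ℚ 2)^(4*m+8) := by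
          rw [← pow_add, show 6 + (4*m+2) = 4*m+8 from by omega]
  rw [hD, hbr] at hII
  have hIV : 2 * X * Td Ob * ((qPochInf ℚ 1)^2 * (qPochInf ℚ 2)^(4*m+8)) * qPochInf ℚ 8
      = (qPochInf ℚ 4)^(2*m) * (qPochInf ℚ 2)^3 *
        (4 * X * ((qPochInf ℚ 1)^2 * qPochInf ℚ 2 * (qPochInf ℚ 4)^2 * (qPochInf ℚ 16)^2)) := by
    linear_combination qPochInf ℚ 8 * hII + ((qPochInf ℚ 4)^(2*m) * (qPochInf ℚ 2)^3) * crux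
  have hu : (2 * X * ((qPochInf ℚ 1)^2 * (qPochInf ℚ 2)^4) : QX) ≠ 0 := by
    apply mul_ne_zero
    apply mul_ne_zero qx_two_ne_zero PowerSeries.X_ne_zero
    exact mul_ne_zero (pow_ne_zero _ (qPochInf_ne_zero (le_refl 1)))
      (pow_ne_zero _ (qPochInf_ne_zero (by omega)))
  have hIII : Td Ob * ((qPochInf ℚ 2)^(4*m+4) * qPochInf ℚ 8)
      = 2 * ((qPochInf ℚ 4)^(2*m+2) * (qPochInf ℚ 16)^2) := by
    apply mul_left_cancel₀ hu
    calc (2 * X * ((qPochInf ℚ 1)^2 * (qPochInf ℚ 2)^4)) *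
          (Td Ob * ((qPochInf ℚ 2)^(4*m+4) * qPochInf ℚ 8))
        = 2 * X * Td Ob * ((qPochInf ℚ 1)^2 *
            ((qPochInf ℚ 2)^4 * (qPochInf ℚ 2)^(4*m+4))) * qPochInf ℚ 8 := by ring
      _ = 2 * X * Td Ob * ((qPochInf ℚ 1)^2 * (qPochInf ℚ 2)^(4*m+8)) * qPochInf ℚ 8 := by
          rw [← pow_add, show 4 + (4*m+4) = 4*m+8 from by omega]
      _ = (qPochInf ℚ 4)^(2*m) * (qPochInf ℚ 2)^3 *
            (4 * X * ((qPochInf ℚ 1)^2 * qPochInf ℚ 2 * (qPochInf ℚ 4)^2 * (qPochInf ℚ 16)^2)) := hIV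
      _ = (2 * X * ((qPochInf ℚ 1)^2 * (qPochInf ℚ 2)^4)) *
            (2 * ((qPochInf ℚ 4)^(2*m) * (qPochInf ℚ 4)^2 * (qPochInf ℚ 16)^2)) := by ring
      _ = (2 * X * ((qPochInf ℚ 1)^2 * (qPochInf ℚ 2)^4)) *
            (2 * ((qPochInf ℚ 4)^(2*m+2) * (qPochInf ℚ 16)^2)) := by
          rw [← pow_add]
  -- conclude via Td injectivity
  apply Td_injective
  have hv : constantCoeff (R := ℚ) ((qPochInf ℚ 2)^(4*m+4) * qPochInf ℚ 8) ≠ 0 := by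
    rw [map_mul, map_pow, constantCoeff_qPochInf (by omega : (1:ℕ) ≤ 2),
      constantCoeff_qPochInf (by omega : (1:ℕ) ≤ 8), one_pow, one_mul]
    norm_num
  have hw : constantCoeff (R := ℚ) ((qPochInf ℚ 1)^(4*m+4) * qPochInf ℚ 4) ≠ 0 := by
    rw [map_mul, map_pow, constantCoeff_qPochInf (le_refl 1),
      constantCoeff_qPochInf (by omega : (1:ℕ) ≤ 4), one_pow, one_mul]
    norm_num
  have hTdR : Td (2 * (qPochInf ℚ 2 ^ (2*m+2) * qPochInf ℚ 8 ^ 2 *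
        (qPochInf ℚ 1 ^ (4*m+4) * qPochInf ℚ 4)⁻¹))
      = 2 * ((qPochInf ℚ 4)^(2*m+2) * (qPochInf ℚ 16)^2 *
        ((qPochInf ℚ 2)^(4*m+4) * qPochInf ℚ 8)⁻¹) := by
    rw [map_mul, map_ofNat, map_mul, map_mul, map_pow, map_pow, Td_inv hw, map_mul, map_pow]
    have t1 : Td (qPochInf ℚ 1) = qPochInf ℚ 2 := by
      have := Td_qPochInf 1 (le_refl 1); rwa [show 2*1 = 2 from rfl] at this
    have t2 : Td (qPochInf ℚ 2) = qPochInf ℚ 4 := by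
      have := Td_qPochInf 2 (by omega); rwa [show 2*2 = 4 from rfl] at this
    have t4 : Td (qPochInf ℚ 4) = qPochInf ℚ 8 := by
      have := Td_qPochInf 4 (by omega); rwa [show 2*4 = 8 from rfl] at this
    have t8 : Td (qPochInf ℚ 8) = qPochInf ℚ 16 := by
      have := Td_qPochInf 8 (by omega); rwa [show 2*8 = 16 from rfl] at this
    rw [t1, t2, t4, t8]
  rw [hTdR]
  calc Td Ob
      = Td Ob * (((qPochInf ℚ 2)^(4*m+4) * qPochInf ℚ 8) *
          ((qPochInf ℚ 2)^(4*m+4) * qPochInf ℚ 8)⁻¹) := by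
        rw [PowerSeries.mul_inv_cancel _ hv, mul_one]
    _ = (Td Ob * ((qPochInf ℚ 2)^(4*m+4) * qPochInf ℚ 8)) *
          ((qPochInf ℚ 2)^(4*m+4) * qPochInf ℚ 8)⁻¹ := by ring
    _ = (2 * ((qPochInf ℚ 4)^(2*m+2) * (qPochInf ℚ 16)^2)) *
          ((qPochInf ℚ 2)^(4*m+4) * qPochInf ℚ 8)⁻¹ := by rw [hIII]
    _ = 2 * ((qPochInf ℚ 4)^(2*m+2) * (qPochInf ℚ 16)^2 *
          ((qPochInf ℚ 2)^(4*m+4) * qPochInf ℚ 8)⁻¹) := by ring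

/-- For every `m ≥ 0`, the identity of formal power series
`∑_{n≥0} a̅_{2m+1}(2n+1) qⁿ = 2 f₂^(2m+2) f₈² / (f₁^(4m+4) f₄)` holds, i.e. for
every `n ≥ 0`, `a̅_{2m+1}(2n+1)` equals twice the coefficient of `qⁿ` in
`(q²;q²)_∞^(2m+2) (q⁸;q⁸)_∞² / ((q;q)_∞^(4m+4) (q⁴;q⁴)_∞)` (the quotient is taken
in the ring of formal power series over `ℚ`, where the denominator is invertible). -/
theorem overcubic_odd_gen_fun (abar : ℕ → ℕ → ℕ) (habar : IsGenOvercubic abar)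
    (m : ℕ) :
    (PowerSeries.mk fun n => (abar (2 * m + 1) (2 * n + 1) : ℚ)) =
      2 * (qPochInf ℚ 2 ^ (2 * m + 2) * qPochInf ℚ 8 ^ 2 *
        (qPochInf ℚ 1 ^ (4 * m + 4) * qPochInf ℚ 4)⁻¹) := by
  exact overcubic_odd_gen_fun' abar habar m

end
end
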